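/- arXiv:1106.4454 — 2 statements merged into one kernel-verified Lean document; each statement's English description precedes it below -/
import Mathlib

section
/- Let T be a tournament on a finite vertex set, let k be a nonnegative integer, let A' be a DESC-set of T with |A'| ≤ k, and let T' = T − A'. Suppose X is a set of vertices of T with |X| ≥ 4k + 3 such that max_{x∈X} d⁺_T(x) − min_{x∈X} d⁺_T(x) ≤ k, and such that every vertex v ∉ X satisfies either d⁺_T(v) > min_{x∈X} d⁺_T(x) + k or d⁺_T(v) < max_{x∈X} d⁺_T(x) − k. Then X is exactly the vertex set of one strong component of T'. -/
/-!
Digraphs on a finite vertex type `V` are modelled by their arc sets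
`D : Finset (V × V)`, where `(x, y) ∈ D` means there is an arc from `x` to `y`.
-/

namespace DescPaper

variable {V : Type*} [Fintype V] [DecidableEq V]

/-- The out-degree of `x` in the digraph `D`. -/
def outDeg (D : Finset (V × V)) (x : V) : ℕ :=
  (D.filter (fun a => a.1 = x)).card

/-- The in-degree of `x` in the digraph `D`. -/
def inDeg (D : Finset (V × V)) (x : V) : ℕ :=
  (D.filter (fun a => a.2 = x)).card

/-- The number of arcs of `D` from `x` to a vertex of `Y`. -/
def outDegInto (D : Finset (V × V)) (x : V) (Y : Finset V) : ℕ :=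
  (D.filter (fun a => a.1 = x ∧ a.2 ∈ Y)).card

/-- The subgraph of `D` induced by the vertex set `X`. -/
def induce (D : Finset (V × V)) (X : Finset V) : Finset (V × V) :=
  D.filter (fun a => a.1 ∈ X ∧ a.2 ∈ X)

/-- Reachability by a directed path in the digraph `D`. -/
def Reach (D : Finset (V × V)) : V → V → Prop :=
  Relation.ReflTransGen (fun u v => (u, v) ∈ D)

/-- The subgraph of `D` induced by `X` is strongly connected. -/
def StronglyConnectedOn (D : Finset (V × V)) (X : Finset V) : Prop :=
  ∀ x ∈ X, ∀ y ∈ X, Reach (induce D X) x y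

/-- `X` is the vertex set of a strong component of `D`:
a maximal (nonempty) vertex set inducing a strongly connected subgraph. -/
def IsStrongComponent (D : Finset (V × V)) (X : Finset V) : Prop :=
  X.Nonempty ∧ StronglyConnectedOn D X ∧
    ∀ Y : Finset V, X ⊆ Y → StronglyConnectedOn D Y → Y = X

/-- The digraph `D` is balanced: every vertex has equal in- and out-degree. -/
def IsBalanced (D : Finset (V × V)) : Prop :=
  ∀ x : V, outDeg D x = inDeg D x

/-- The subgraph of `D` induced by `X` is Eulerian:
strongly connected and balanced. -/
def EulerianOn (D : Finset (V × V)) (X : Finset V) : Prop :=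
  StronglyConnectedOn D X ∧ IsBalanced (induce D X)

/-- `A'` is a DESC-set of `D`: a set of arcs of `D` such that every strong
component of `D - A'` is Eulerian. -/
def IsDESC (D A' : Finset (V × V)) : Prop :=
  A' ⊆ D ∧ ∀ X : Finset V, IsStrongComponent (D \ A') X → EulerianOn (D \ A') X

/-- `desc D` is the minimum size of a DESC-set of `D`. -/
noncomputable def desc (D : Finset (V × V)) : ℕ :=
  sInf {n | ∃ A' : Finset (V × V), IsDESC D A' ∧ A'.card = n}

/-- `T` is a tournament: no loops, and for every pair of distinct vertices
exactly one of the two possible arcs is present. -/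
def IsTournament (T : Finset (V × V)) : Prop :=
  (∀ x : V, (x, x) ∉ T) ∧ ∀ x y : V, x ≠ y → ((x, y) ∈ T ↔ (y, x) ∉ T)

/-- `dstar A' X Y` is the number of arcs of `A'` with one endpoint in `X`
and the other endpoint in `Y` (in either direction). -/
def dstar (A' : Finset (V × V)) (X Y : Finset V) : ℕ :=
  (A'.filter (fun a => (a.1 ∈ X ∧ a.2 ∈ Y) ∨ (a.1 ∈ Y ∧ a.2 ∈ X))).card

end DescPaper

open DescPaper

namespace StmtProof
open Finset DescPaper
set_option linter.unusedSectionVars false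
set_option maxHeartbeats 1000000

variable {V : Type*} [Fintype V] [DecidableEq V]

/-- out-neighborhood -/
def NO (D : Finset (V × V)) (u : V) : Finset V := Finset.univ.filter (fun w => (u, w) ∈ D)

@[simp] lemma mem_NO {D : Finset (V × V)} {u w : V} : w ∈ NO D u ↔ (u, w) ∈ D := by
  simp [NO]

lemma card_tail (E : Finset (V × V)) (u : V) (S : Finset V) :
    (S.filter (fun w => (u, w) ∈ E)).card = (E.filter (fun a => a.1 = u ∧ a.2 ∈ S)).card := by
  apply Finset.card_bij' (fun w _ => (u, w)) (fun a _ => a.2)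
  · intro w hw
    simp only [mem_filter] at hw ⊢
    exact ⟨hw.2, by simp, hw.1⟩
  · intro a ha
    simp only [mem_filter] at ha ⊢
    obtain ⟨ha1, ha2, ha3⟩ := ha
    refine ⟨ha3, ?_⟩
    rw [← ha2]; simpa using ha1
  · intro w hw; rfl
  · intro a ha
    simp only [mem_filter] at ha
    rw [← ha.2.1]

lemma card_head (E : Finset (V × V)) (u : V) (S : Finset V) :
    (S.filter (fun w => (w, u) ∈ E)).card = (E.filter (fun a => a.2 = u ∧ a.1 ∈ S)).card := by
  apply Finset.card_bij' (fun w _ => (w, u)) (fun a _ => a.1)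
  · intro w hw
    simp only [mem_filter] at hw ⊢
    exact ⟨hw.2, by simp, hw.1⟩
  · intro a ha
    simp only [mem_filter] at ha ⊢
    obtain ⟨ha1, ha2, ha3⟩ := ha
    refine ⟨ha3, ?_⟩
    rw [← ha2]; simpa using ha1
  · intro w hw; rfl
  · intro a ha
    simp only [mem_filter] at ha
    rw [← ha.2.1]

lemma outDeg_eq (D : Finset (V × V)) (u : V) : outDeg D u = (NO D u).card := by
  rw [NO, card_tail, outDeg]
  congr 1
  apply filter_congr
  intro a _
  simp

lemma reach_mono {D : Finset (V × V)} {A B : Finset V} (h : A ⊆ B) {x y : V}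
    (hxy : Reach (induce D A) x y) : Reach (induce D B) x y := by
  refine Relation.ReflTransGen.mono (fun u v huv => ?_) x y hxy
  simp only [induce, mem_filter] at huv ⊢
  exact ⟨huv.1, h huv.2.1, h huv.2.2⟩

lemma reach_arc {D : Finset (V × V)} {A : Finset V} {x y : V} (hx : x ∈ A) (hy : y ∈ A)
    (hxy : (x, y) ∈ D) : Reach (induce D A) x y := by
  apply Relation.ReflTransGen.single
  simp only [induce, mem_filter]
  exact ⟨hxy, hx, hy⟩

/-- union of two strongly connected sets with reach both ways between hubs -/
lemma sc_union {D : Finset (V × V)} {C C' : Finset V} (hC : StronglyConnectedOn D C)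
    (hC' : StronglyConnectedOn D C') {c d : V} (hc : c ∈ C) (hd : d ∈ C')
    (hcd : Reach (induce D (C ∪ C')) c d) (hdc : Reach (induce D (C ∪ C')) d c) :
    StronglyConnectedOn D (C ∪ C') := by
  have h1 : ∀ x ∈ C, ∀ y ∈ C, Reach (induce D (C ∪ C')) x y := fun x hx y hy =>
    reach_mono subset_union_left (hC x hx y hy)
  have h2 : ∀ x ∈ C', ∀ y ∈ C', Reach (induce D (C ∪ C')) x y := fun x hx y hy =>
    reach_mono subset_union_right (hC' x hx y hy)
  intro x hx y hy
  rcases mem_union.1 hx with hx | hx <;> rcases mem_union.1 hy with hy | hy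
  · exact h1 x hx y hy
  · exact ((h1 x hx c hc).trans hcd).trans (h2 d hd y hy)
  · exact ((h2 x hx d hd).trans hdc).trans (h1 c hc y hy)
  · exact h2 x hx y hy

/-- a strong component absorbs any strongly connected set with arcs both ways -/
lemma absorb {D : Finset (V × V)} {C S : Finset V} (hC : IsStrongComponent D C)
    (hS : StronglyConnectedOn D S) {c1 d1 d2 c2 : V} (hc1 : c1 ∈ C) (hd1 : d1 ∈ S)
    (hd2 : d2 ∈ S) (hc2 : c2 ∈ C) (h1 : (c1, d1) ∈ D) (h2 : (d2, c2) ∈ D) : S ⊆ C := by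
  have hsc : StronglyConnectedOn D (C ∪ S) := by
    apply sc_union hC.2.1 hS hc1 hd1
    · exact reach_arc (mem_union_left _ hc1) (mem_union_right _ hd1) h1
    · exact ((reach_mono subset_union_right (hS d1 hd1 d2 hd2)).trans
        (reach_arc (mem_union_right _ hd2) (mem_union_left _ hc2) h2)).trans
        (reach_mono subset_union_left (hC.2.1 c2 hc2 c1 hc1))
  have := hC.2.2 (C ∪ S) subset_union_left hsc
  rw [← this]
  exact subset_union_right

/-- two strong components sharing a vertex are equal -/
lemma comp_unique {D : Finset (V × V)} {C C' : Finset V} (hC : IsStrongComponent D C)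
    (hC' : IsStrongComponent D C') {x : V} (hx : x ∈ C) (hx' : x ∈ C') : C = C' := by
  have hsc : StronglyConnectedOn D (C ∪ C') :=
    sc_union hC.2.1 hC'.2.1 hx hx' (Relation.ReflTransGen.refl) (Relation.ReflTransGen.refl)
  have e1 := hC.2.2 (C ∪ C') subset_union_left hsc
  have e2 := hC'.2.2 (C ∪ C') subset_union_right hsc
  exact e1.symm.trans e2


/-- three-cycle of components collapses -/
lemma absorb3 {D : Finset (V × V)} {C S R : Finset V} (hC : IsStrongComponent D C)
    (hS : StronglyConnectedOn D S) (hR : StronglyConnectedOn D R)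
    {c1 s1 s2 r1 r2 c2 : V} (hc1 : c1 ∈ C) (hs1 : s1 ∈ S) (hs2 : s2 ∈ S) (hr1 : r1 ∈ R)
    (hr2 : r2 ∈ R) (hc2 : c2 ∈ C)
    (a1 : (c1, s1) ∈ D) (a2 : (s2, r1) ∈ D) (a3 : (r2, c2) ∈ D) : S ⊆ C ∧ R ⊆ C := by
  set U := C ∪ S ∪ R with hU
  have hCU : C ⊆ U := fun x hx => by simp [hU, mem_union, hx]
  have hSU : S ⊆ U := fun x hx => by simp [hU, mem_union, hx]
  have hRU : R ⊆ U := fun x hx => by simp [hU, mem_union, hx]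
  have rc : ∀ x ∈ C, ∀ y ∈ C, Reach (induce D U) x y := fun x hx y hy =>
    reach_mono hCU (hC.2.1 x hx y hy)
  have rs : ∀ x ∈ S, ∀ y ∈ S, Reach (induce D U) x y := fun x hx y hy =>
    reach_mono hSU (hS x hx y hy)
  have rr : ∀ x ∈ R, ∀ y ∈ R, Reach (induce D U) x y := fun x hx y hy =>
    reach_mono hRU (hR x hx y hy)
  have e1 : Reach (induce D U) c1 s1 := reach_arc (hCU hc1) (hSU hs1) a1
  have e2 : Reach (induce D U) s2 r1 := reach_arc (hSU hs2) (hRU hr1) a2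
  have e3 : Reach (induce D U) r2 c2 := reach_arc (hRU hr2) (hCU hc2) a3
  -- reach from c1 to any, from any to c1
  have toAny : ∀ y ∈ U, Reach (induce D U) c1 y := by
    intro y hy
    simp only [hU, mem_union] at hy
    rcases hy with (hy | hy) | hy
    · exact rc c1 hc1 y hy
    · exact e1.trans (rs s1 hs1 y hy)
    · exact ((e1.trans (rs s1 hs1 s2 hs2)).trans e2).trans (rr r1 hr1 y hy)
  have fromAny : ∀ x ∈ U, Reach (induce D U) x c1 := by
    intro x hx
    simp only [hU, mem_union] at hx
    rcases hx with (hx | hx) | hx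
    · exact rc x hx c1 hc1
    · exact (((rs x hx s2 hs2).trans e2).trans ((rr r1 hr1 r2 hr2).trans e3)).trans
        (rc c2 hc2 c1 hc1)
    · exact ((rr x hx r2 hr2).trans e3).trans (rc c2 hc2 c1 hc1)
  have hsc : StronglyConnectedOn D U := fun x hx y hy =>
    (fromAny x hx).trans (toAny y hy)
  have hUC : U = C := hC.2.2 U (fun x hx => hCU hx) hsc
  constructor
  · intro x hx; rw [← hUC]; exact hSU hx
  · intro x hx; rw [← hUC]; exact hRU hx

/-- every nonempty strongly connected set is contained in a strong component -/
lemma exists_comp {D : Finset (V × V)} {Y : Finset V} (hne : Y.Nonempty)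
    (hY : StronglyConnectedOn D Y) : ∃ C : Finset V, Y ⊆ C ∧ IsStrongComponent D C := by
  classical
  set s := Finset.univ.powerset.filter (fun Z => Y ⊆ Z ∧ StronglyConnectedOn D Z) with hs
  have hYs : Y ∈ s := by
    simp only [hs, mem_filter, mem_powerset]
    exact ⟨subset_univ Y, Subset.rfl, hY⟩
  obtain ⟨C, hCs, hmax⟩ := s.exists_max_image Finset.card ⟨Y, hYs⟩
  simp only [hs, mem_filter, mem_powerset] at hCs
  refine ⟨C, hCs.2.1, ⟨hne.mono hCs.2.1, hCs.2.2, ?_⟩⟩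
  intro Z hCZ hZ
  have hZs : Z ∈ s := by
    simp only [hs, mem_filter, mem_powerset]
    exact ⟨subset_univ Z, hCs.2.1.trans hCZ, hZ⟩
  exact (eq_of_subset_of_card_le hCZ (hmax Z hZs)).symm

lemma sc_singleton (D : Finset (V × V)) (v : V) : StronglyConnectedOn D {v} := by
  intro x hx y hy
  simp only [mem_singleton] at hx hy
  subst hx; subst hy
  exact Relation.ReflTransGen.refl

lemma exists_comp_vertex (D : Finset (V × V)) (v : V) :
    ∃ C : Finset V, v ∈ C ∧ IsStrongComponent D C := by
  obtain ⟨C, h1, h2⟩ := exists_comp (Finset.singleton_nonempty v) (sc_singleton D v)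
  exact ⟨C, h1 (mem_singleton_self v), h2⟩

section Main
variable {T A' : Finset (V × V)}

/-- pairing count inside a set containing u -/
lemma pair_count (hT : IsTournament T) {C : Finset V} {u : V} (hu : u ∈ C) :
    (C.filter (fun w => (u, w) ∈ T)).card + (C.filter (fun w => (w, u) ∈ T)).card + 1
      = C.card := by
  have hdis : Disjoint (C.filter (fun w => (u, w) ∈ T)) (C.filter (fun w => (w, u) ∈ T)) := by
    rw [disjoint_left]
    intro w h1 h2
    simp only [mem_filter] at h1 h2
    have hne : u ≠ w := by rintro rfl; exact hT.1 u h1.2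
    exact ((hT.2 u w hne).1 h1.2) h2.2
  have hun : (C.filter (fun w => (u, w) ∈ T)) ∪ (C.filter (fun w => (w, u) ∈ T))
      = C.erase u := by
    ext w
    simp only [mem_union, mem_filter, mem_erase]
    constructor
    · rintro (⟨hw, h⟩ | ⟨hw, h⟩)
      · exact ⟨fun he => hT.1 u (he ▸ h), hw⟩
      · exact ⟨fun he => hT.1 u (he ▸ h), hw⟩
    · rintro ⟨hne, hw⟩
      by_cases h : (u, w) ∈ T
      · exact Or.inl ⟨hw, h⟩
      · exact Or.inr ⟨hw, (hT.2 w u hne).2 (by simpa using h)⟩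
  have := card_union_of_disjoint hdis
  rw [hun, card_erase_of_mem hu] at this
  have hpos : 1 ≤ C.card := card_pos.2 ⟨u, hu⟩
  omega

/-- splitting T-arcs into T'-arcs and A'-arcs -/
lemma split_out (hA : A' ⊆ T) (C : Finset V) (u : V) :
    (C.filter (fun w => (u, w) ∈ T)).card
      = (C.filter (fun w => (u, w) ∈ T \ A')).card + (C.filter (fun w => (u, w) ∈ A')).card := by
  have h1 : C.filter (fun w => (u, w) ∈ T)
      = C.filter (fun w => (u, w) ∈ T \ A') ∪ C.filter (fun w => (u, w) ∈ A') := by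
    rw [← filter_or]
    apply filter_congr
    intro w _
    simp only [mem_sdiff]
    constructor
    · intro h; by_cases hA' : (u, w) ∈ A'
      · exact Or.inr hA'
      · exact Or.inl ⟨h, hA'⟩
    · rintro (⟨h, _⟩ | h); exact h; exact hA h
  rw [h1]
  apply card_union_of_disjoint
  rw [disjoint_left]
  intro w h1 h2
  simp only [mem_filter, mem_sdiff] at h1 h2
  exact h1.2.2 h2.2

lemma split_in (hA : A' ⊆ T) (C : Finset V) (u : V) :
    (C.filter (fun w => (w, u) ∈ T)).card
      = (C.filter (fun w => (w, u) ∈ T \ A')).card + (C.filter (fun w => (w, u) ∈ A')).card := by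
  have h1 : C.filter (fun w => (w, u) ∈ T)
      = C.filter (fun w => (w, u) ∈ T \ A') ∪ C.filter (fun w => (w, u) ∈ A') := by
    rw [← filter_or]
    apply filter_congr
    intro w _
    simp only [mem_sdiff]
    constructor
    · intro h; by_cases hA' : (w, u) ∈ A'
      · exact Or.inr hA'
      · exact Or.inl ⟨h, hA'⟩
    · rintro (⟨h, _⟩ | h); exact h; exact hA h
  rw [h1]
  apply card_union_of_disjoint
  rw [disjoint_left]
  intro w h1 h2
  simp only [mem_filter, mem_sdiff] at h1 h2
  exact h1.2.2 h2.2

/-- the fundamental balance equation inside an Eulerian strong component -/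
lemma balance_eq (hT : IsTournament T) (hA : A' ⊆ T) {C : Finset V}
    (hbal : IsBalanced (induce (T \ A') C)) {u : V} (hu : u ∈ C) :
    2 * (C.filter (fun w => (u, w) ∈ T)).card + (C.filter (fun w => (w, u) ∈ A')).card + 1
      = C.card + (C.filter (fun w => (u, w) ∈ A')).card := by
  have hb := hbal u
  have hout : outDeg (induce (T \ A') C) u = (C.filter (fun w => (u, w) ∈ T \ A')).card := by
    rw [outDeg_eq]
    congr 1
    ext w
    simp only [mem_NO, induce, mem_filter, Finset.mem_univ, true_and]
    constructor
    · rintro ⟨h1, _, h3⟩; exact ⟨h3, h1⟩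
    · rintro ⟨h1, h2⟩; exact ⟨h2, hu, h1⟩
  have hin : inDeg (induce (T \ A') C) u = (C.filter (fun w => (w, u) ∈ T \ A')).card := by
    rw [inDeg]
    have e0 : (induce (T \ A') C).filter (fun a => a.2 = u)
        = (induce (T \ A') C).filter (fun a => a.2 = u ∧ a.1 ∈ Finset.univ) := by
      apply filter_congr; intro a _; simp
    rw [e0, ← card_head]
    congr 1
    ext w
    simp only [mem_filter, Finset.mem_univ, true_and, induce]
    constructor
    · rintro ⟨h1, h2, h3⟩; exact ⟨h2, h1⟩
    · rintro ⟨h1, h2⟩; exact ⟨h2, h1, hu⟩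
  rw [hout, hin] at hb
  have e1 := split_out hA C u
  have e2 := split_in hA C u
  have e3 := pair_count hT hu
  omega

/-- vertices with no T'-arc into C -/
def W1 (D : Finset (V × V)) (C : Finset V) : Finset V :=
  (Finset.univ \ C).filter (fun w => ∀ c ∈ C, (w, c) ∉ D)

def Zc (D : Finset (V × V)) (C : Finset V) : Finset V :=
  (Finset.univ \ C) \ W1 D C

lemma mem_W1 {D : Finset (V × V)} {C : Finset V} {w : V} :
    w ∈ W1 D C ↔ w ∉ C ∧ ∀ c ∈ C, (w, c) ∉ D := by
  simp [W1]

lemma mem_Zc {D : Finset (V × V)} {C : Finset V} {w : V} :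
    w ∈ Zc D C ↔ w ∉ C ∧ ∃ c ∈ C, (w, c) ∈ D := by
  simp only [Zc, mem_sdiff, mem_W1, Finset.mem_univ, true_and]
  constructor
  · rintro ⟨h1, h2⟩
    push_neg at h2
    exact ⟨h1, h2 h1⟩
  · rintro ⟨h1, c, hc, harc⟩
    refine ⟨h1, ?_⟩
    push_neg
    intro _
    exact ⟨c, hc, harc⟩

/-- no T'-arc from a strong component to a Z-vertex -/
lemma no_arc_to_Z {C : Finset V} (hC : IsStrongComponent (T \ A') C) {w : V}
    (hw : w ∈ Zc (T \ A') C) : ∀ c ∈ C, (c, w) ∉ T \ A' := by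
  intro c hc harc
  obtain ⟨hwC, c', hc', harc'⟩ := mem_Zc.1 hw
  have := absorb hC (sc_singleton (T \ A') w) hc (mem_singleton_self w) (mem_singleton_self w)
    hc' harc harc'
  exact hwC (this (mem_singleton_self w))

/-- partition of univ by C, W1, Zc -/
lemma univ_eq_CWZ (D : Finset (V × V)) (C : Finset V) :
    C ∪ W1 D C ∪ Zc D C = Finset.univ := by
  rw [union_assoc]
  have h1 : W1 D C ∪ Zc D C = Finset.univ \ C := by
    rw [Zc]
    exact union_sdiff_of_subset (show W1 D C ⊆ Finset.univ \ C from filter_subset _ _)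
  rw [h1, union_sdiff_of_subset (subset_univ C)]

lemma disj_C_W1 (D : Finset (V × V)) (C : Finset V) : Disjoint C (W1 D C) := by
  rw [disjoint_right]
  intro w hw hwC
  exact (mem_W1.1 hw).1 hwC

lemma disj_C_Zc (D : Finset (V × V)) (C : Finset V) : Disjoint C (Zc D C) := by
  rw [disjoint_right]
  intro w hw hwC
  exact (mem_Zc.1 hw).1 hwC

lemma disj_W1_Zc (D : Finset (V × V)) (C : Finset V) : Disjoint (W1 D C) (Zc D C) :=
  disjoint_sdiff

/-- generic: filter card over univ splits over a 3-partition -/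
lemma card_filter_univ3 {C S1 S2 : Finset V} (hu : C ∪ S1 ∪ S2 = Finset.univ)
    (d1 : Disjoint C S1) (d2 : Disjoint C S2) (d3 : Disjoint S1 S2)
    (p : V → Prop) [DecidablePred p] :
    (Finset.univ.filter p).card = (C.filter p).card + (S1.filter p).card + (S2.filter p).card := by
  rw [← hu, filter_union, filter_union, card_union_of_disjoint, card_union_of_disjoint]
  · exact disjoint_filter_filter d1
  case _ =>
    rw [disjoint_union_left]
    exact ⟨disjoint_filter_filter d2, disjoint_filter_filter d3⟩

lemma outDeg_filter (T : Finset (V × V)) (u : V) :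
    outDeg T u = (Finset.univ.filter (fun w => (u, w) ∈ T)).card := by
  rw [outDeg_eq]; rfl

lemma sum_tails (B : Finset V) : (∑ x ∈ B, (A'.filter (fun a => a.1 = x)).card) ≤ A'.card := by
  have e1 : (∑ x ∈ B, (A'.filter (fun a => a.1 = x)).card)
      = ∑ a ∈ A', ∑ x ∈ B, ite (a.1 = x) 1 0 := by
    rw [Finset.sum_comm]
    apply Finset.sum_congr rfl
    intro x _
    rw [Finset.card_filter]
  rw [e1]
  calc ∑ a ∈ A', ∑ x ∈ B, ite (a.1 = x) 1 0 ≤ ∑ _a ∈ A', 1 := by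
        apply Finset.sum_le_sum
        intro a _
        rw [Finset.sum_ite_eq]
        split <;> omega
    _ = A'.card := by simp

lemma sum_heads (B : Finset V) : (∑ x ∈ B, (A'.filter (fun a => a.2 = x)).card) ≤ A'.card := by
  have e1 : (∑ x ∈ B, (A'.filter (fun a => a.2 = x)).card)
      = ∑ a ∈ A', ∑ x ∈ B, ite (a.2 = x) 1 0 := by
    rw [Finset.sum_comm]
    apply Finset.sum_congr rfl
    intro x _
    rw [Finset.card_filter]
  rw [e1]
  calc ∑ a ∈ A', ∑ x ∈ B, ite (a.2 = x) 1 0 ≤ ∑ _a ∈ A', 1 := by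
        apply Finset.sum_le_sum
        intro a _
        rw [Finset.sum_ite_eq]
        split <;> omega
    _ = A'.card := by simp

/-- budget for the degree-stability estimate -/
lemma budget_stab {C : Finset V} {u v : V} (hu : u ∈ C) (hv : v ∈ C) :
    (C.filter (fun w => (u, w) ∈ A')).card
      + 2 * ((Zc (T \ A') C).filter (fun w => (u, w) ∈ A')).card
      + (C.filter (fun w => (w, v) ∈ A')).card
      + 2 * ((W1 (T \ A') C).filter (fun w => (w, v) ∈ A')).card ≤ 2 * A'.card := by
  have hZ : ∀ w, w ∈ Zc (T \ A') C → w ∉ C := fun w hw => (mem_Zc.1 hw).1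
  have hW : ∀ w, w ∈ W1 (T \ A') C → w ∉ C := fun w hw => (mem_W1.1 hw).1
  rw [card_tail, card_tail, card_head, card_head]
  have e1 : ∀ S : Finset V, (A'.filter (fun a => a.1 = u ∧ a.2 ∈ S)).card
      = ∑ a ∈ A', ite (a.1 = u ∧ a.2 ∈ S) 1 0 := fun S => Finset.card_filter _ _
  have e2 : ∀ S : Finset V, (A'.filter (fun a => a.2 = v ∧ a.1 ∈ S)).card
      = ∑ a ∈ A', ite (a.2 = v ∧ a.1 ∈ S) 1 0 := fun S => Finset.card_filter _ _
  rw [e1, e1, e2, e2, Finset.mul_sum, Finset.mul_sum, ← Finset.sum_add_distrib,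
    ← Finset.sum_add_distrib, ← Finset.sum_add_distrib]
  calc (∑ a ∈ A', (ite (a.1 = u ∧ a.2 ∈ C) 1 0
        + 2 * ite (a.1 = u ∧ a.2 ∈ Zc (T \ A') C) 1 0
        + ite (a.2 = v ∧ a.1 ∈ C) 1 0
        + 2 * ite (a.2 = v ∧ a.1 ∈ W1 (T \ A') C) 1 0)) ≤ ∑ _a ∈ A', 2 := by
        apply Finset.sum_le_sum
        intro a _
        by_cases h2 : a.1 = u ∧ a.2 ∈ Zc (T \ A') C
        · have hnc : a.2 ∉ C := hZ _ h2.2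
          have e1' : ¬(a.1 = u ∧ a.2 ∈ C) := fun h => hnc h.2
          have e3' : ¬(a.2 = v ∧ a.1 ∈ C) := fun h => hnc (h.1 ▸ hv)
          have e4' : ¬(a.2 = v ∧ a.1 ∈ W1 (T \ A') C) := fun h => hnc (h.1 ▸ hv)
          rw [if_neg e1', if_pos h2, if_neg e3', if_neg e4']
        · by_cases h4 : a.2 = v ∧ a.1 ∈ W1 (T \ A') C
          · have hnc : a.1 ∉ C := hW _ h4.2
            have e1' : ¬(a.1 = u ∧ a.2 ∈ C) := fun h => hnc (h.1 ▸ hu)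
            have e3' : ¬(a.2 = v ∧ a.1 ∈ C) := fun h => hnc h.2
            rw [if_neg e1', if_neg h2, if_neg e3', if_pos h4]
          · simp only [h2, h4, if_false]
            split_ifs <;> omega
    _ = 2 * A'.card := by
        rw [Finset.sum_const, smul_eq_mul, mul_comm]

/-- vertices in the same strong component have similar out-degrees in T -/
lemma deg_stab (hT : IsTournament T) (hDESC : IsDESC T A') {C : Finset V}
    (hC : IsStrongComponent (T \ A') C) {u v : V} (hu : u ∈ C) (hv : v ∈ C) :
    2 * outDeg T u ≤ 2 * outDeg T v + 2 * A'.card := by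
  have hA : A' ⊆ T := hDESC.1
  have hbal : IsBalanced (induce (T \ A') C) := (hDESC.2 C hC).2
  have bu := balance_eq hT hA hbal hu
  have bv := balance_eq hT hA hbal hv
  have hpart := card_filter_univ3 (univ_eq_CWZ (T \ A') C) (disj_C_W1 (T \ A') C)
    (disj_C_Zc (T \ A') C) (disj_W1_Zc (T \ A') C)
  have du : outDeg T u = (C.filter (fun w => (u, w) ∈ T)).card
      + ((W1 (T \ A') C).filter (fun w => (u, w) ∈ T)).card
      + ((Zc (T \ A') C).filter (fun w => (u, w) ∈ T)).card := by
    rw [outDeg_filter]; exact hpart _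
  have dv : outDeg T v = (C.filter (fun w => (v, w) ∈ T)).card
      + ((W1 (T \ A') C).filter (fun w => (v, w) ∈ T)).card
      + ((Zc (T \ A') C).filter (fun w => (v, w) ∈ T)).card := by
    rw [outDeg_filter]; exact hpart _
  -- u's T-arcs into Z are all in A'
  have hZu : ((Zc (T \ A') C).filter (fun w => (u, w) ∈ T)).card
      ≤ ((Zc (T \ A') C).filter (fun w => (u, w) ∈ A')).card := by
    apply card_le_card
    intro w hw
    simp only [mem_filter] at hw ⊢
    refine ⟨hw.1, ?_⟩
    by_contra hA'
    exact no_arc_to_Z hC hw.1 u hu (mem_sdiff.2 ⟨hw.2, hA'⟩)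
  have hWu : ((W1 (T \ A') C).filter (fun w => (u, w) ∈ T)).card ≤ (W1 (T \ A') C).card :=
    card_le_card (filter_subset _ _)
  -- v beats almost all of W1
  have hWv : (W1 (T \ A') C).card ≤ ((W1 (T \ A') C).filter (fun w => (v, w) ∈ T)).card
      + ((W1 (T \ A') C).filter (fun w => (w, v) ∈ A')).card := by
    calc (W1 (T \ A') C).card
        ≤ (((W1 (T \ A') C).filter (fun w => (v, w) ∈ T))
          ∪ ((W1 (T \ A') C).filter (fun w => (w, v) ∈ A'))).card := by
          apply card_le_card
          intro w hw
          obtain ⟨hwC, hno⟩ := mem_W1.1 hw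
          rw [mem_union, mem_filter, mem_filter]
          by_cases hvw : (v, w) ∈ T
          · exact Or.inl ⟨hw, hvw⟩
          · have hne : w ≠ v := fun he => hwC (he ▸ hv)
            have hwv : (w, v) ∈ T := (hT.2 w v hne).2 (by simpa using hvw)
            right
            refine ⟨hw, ?_⟩
            by_contra hA'
            exact hno v hv (mem_sdiff.2 ⟨hwv, hA'⟩)
      _ ≤ _ := card_union_le _ _
  have hbud := budget_stab (T := T) (A' := A') hu hv
  omega

lemma card_tail_univ (E : Finset (V × V)) (x : V) :
    (Finset.univ.filter (fun w => (x, w) ∈ E)).card = (E.filter (fun a => a.1 = x)).card := by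
  rw [card_tail]
  congr 1
  apply filter_congr
  intro a _
  simp

lemma card_head_univ (E : Finset (V × V)) (x : V) :
    (Finset.univ.filter (fun w => (w, x) ∈ E)).card = (E.filter (fun a => a.2 = x)).card := by
  rw [card_head]
  congr 1
  apply filter_congr
  intro a _
  simp

lemma univ_eq_CDR {C D : Finset V} (hdisj : Disjoint C D) :
    C ∪ D ∪ ((Finset.univ \ C) \ D) = Finset.univ := by
  rw [union_assoc]
  have h1 : D ∪ ((Finset.univ \ C) \ D) = Finset.univ \ C := by
    apply union_sdiff_of_subset
    intro w hw
    simp only [mem_sdiff, Finset.mem_univ, true_and]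
    exact disjoint_right.1 hdisj hw
  rw [h1, union_sdiff_of_subset (subset_univ C)]

lemma disj_D_R {C D : Finset V} : Disjoint D ((Finset.univ \ C) \ D) := disjoint_sdiff

lemma disj_C_R {C D : Finset V} : Disjoint C ((Finset.univ \ C) \ D) := by
  rw [disjoint_right]
  intro w hw
  simp only [mem_sdiff, Finset.mem_univ, true_and] at hw
  exact hw.1

lemma no_rev_arc {C D : Finset V} (hC : IsStrongComponent (T \ A') C)
    (hD : IsStrongComponent (T \ A') D) (hdisj : Disjoint C D)
    (harc : ∃ c ∈ C, ∃ d ∈ D, (c, d) ∈ T \ A') :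
    ∀ d ∈ D, ∀ c ∈ C, (d, c) ∉ T \ A' := by
  rintro d hd c hc hrev
  obtain ⟨c1, hc1, d1, hd1, h1⟩ := harc
  have hsub := absorb hC hD.2.1 hc1 hd1 hd hc h1 hrev
  obtain ⟨y, hy⟩ := hD.1
  exact (disjoint_left.1 hdisj (hsub hy)) hy

/-- KEY LEMMA (below): if x's component is dominated by the component of a clean
vertex u, then x's degree is much smaller. -/
lemma below_lemma (hT : IsTournament T) (hDESC : IsDESC T A') {C D : Finset V}
    (hC : IsStrongComponent (T \ A') C) (hD : IsStrongComponent (T \ A') D)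
    (hdisj : Disjoint C D) {u x : V} (hu : u ∈ C) (hx : x ∈ D)
    (hclean : ∀ a ∈ A', a.1 ≠ u ∧ a.2 ≠ u)
    (harc : ∃ c ∈ C, ∃ d ∈ D, (c, d) ∈ T \ A') :
    2 * outDeg T x + C.card + D.card
      ≤ 2 * outDeg T u + 2 * (A'.filter (fun a => a.1 = x)).card := by
  have hA : A' ⊆ T := hDESC.1
  set R := (Finset.univ \ C) \ D with hR
  have hnoDC := no_rev_arc hC hD hdisj harc
  have hcleanC : ∀ S : Finset V, S.filter (fun w => (w, u) ∈ A') = ∅ := by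
    intro S
    rw [filter_eq_empty_iff]
    intro w _ h
    exact (hclean (w, u) h).2 rfl
  have hcleanC' : ∀ S : Finset V, S.filter (fun w => (u, w) ∈ A') = ∅ := by
    intro S
    rw [filter_eq_empty_iff]
    intro w _ h
    exact (hclean (u, w) h).1 rfl
  -- balance for u in C, clean
  have n1 : 2 * (C.filter (fun w => (u, w) ∈ T)).card + 1 = C.card := by
    have := balance_eq hT hA (hDESC.2 C hC).2 hu
    rw [hcleanC, hcleanC'] at this
    simpa using this
  -- u beats all of D
  have n2 : (D.filter (fun w => (u, w) ∈ T)).card = D.card := by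
    congr 1
    rw [filter_eq_self]
    intro w hw
    have hne : u ≠ w := fun he => (disjoint_left.1 hdisj hu) (he ▸ hw)
    by_contra h
    have hwu : (w, u) ∈ T := (hT.2 w u (Ne.symm hne)).2 (by simpa using h)
    have hwuA : (w, u) ∉ A' := fun hh => (hclean (w, u) hh).2 rfl
    exact hnoDC w hw u hu (mem_sdiff.2 ⟨hwu, hwuA⟩)
  -- x's T-arcs into C are A'-arcs
  have n3 : (C.filter (fun w => (x, w) ∈ T)).card ≤ (C.filter (fun w => (x, w) ∈ A')).card := by
    apply card_le_card
    intro w hw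
    simp only [mem_filter] at hw ⊢
    refine ⟨hw.1, ?_⟩
    by_contra h
    exact hnoDC x hx w hw.1 (mem_sdiff.2 ⟨hw.2, h⟩)
  -- balance for x in D
  have n4 := balance_eq hT hA (hDESC.2 D hD).2 hx
  -- R-region comparison
  have n5 : (R.filter (fun w => (x, w) ∈ T)).card
      ≤ (R.filter (fun w => (u, w) ∈ T)).card + (R.filter (fun w => (x, w) ∈ A')).card := by
    calc (R.filter (fun w => (x, w) ∈ T)).card
        ≤ ((R.filter (fun w => (u, w) ∈ T)) ∪ (R.filter (fun w => (x, w) ∈ A'))).card := by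
          apply card_le_card
          intro w hw
          simp only [mem_filter] at hw
          rw [mem_union, mem_filter, mem_filter]
          by_cases hxwA : (x, w) ∈ A'
          · exact Or.inr ⟨hw.1, hxwA⟩
          · left
            refine ⟨hw.1, ?_⟩
            have hwR := hw.1
            rw [hR] at hwR
            simp only [mem_sdiff, Finset.mem_univ, true_and] at hwR
            have hne : w ≠ u := fun he => hwR.1 (he ▸ hu)
            by_contra h
            have hwu : (w, u) ∈ T := (hT.2 w u hne).2 (by simpa using h)
            have hwuA : (w, u) ∉ A' := fun hh => (hclean (w, u) hh).2 rfl
            obtain ⟨E, hwE, hE⟩ := exists_comp_vertex (T \ A') w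
            obtain ⟨c1, hc1, d1, hd1, h1⟩ := harc
            have habs := absorb3 hC hD.2.1 hE.2.1 hc1 hd1 hx hwE hwE hu h1
              (mem_sdiff.2 ⟨hw.2, hxwA⟩) (mem_sdiff.2 ⟨hwu, hwuA⟩)
            obtain ⟨y, hy⟩ := hD.1
            exact (disjoint_left.1 hdisj (habs.1 hy)) hy
      _ ≤ _ := card_union_le _ _
  -- degree partitions
  have hpart := card_filter_univ3 (univ_eq_CDR hdisj) hdisj (disj_C_R (D := D))
    (disj_D_R (C := C))
  have du : outDeg T u = (C.filter (fun w => (u, w) ∈ T)).card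
      + (D.filter (fun w => (u, w) ∈ T)).card + (R.filter (fun w => (u, w) ∈ T)).card := by
    rw [outDeg_filter]; exact hpart _
  have dx : outDeg T x = (C.filter (fun w => (x, w) ∈ T)).card
      + (D.filter (fun w => (x, w) ∈ T)).card + (R.filter (fun w => (x, w) ∈ T)).card := by
    rw [outDeg_filter]; exact hpart _
  -- budget
  have hbud : (C.filter (fun w => (x, w) ∈ A')).card + (D.filter (fun w => (x, w) ∈ A')).card
      + (R.filter (fun w => (x, w) ∈ A')).card = (A'.filter (fun a => a.1 = x)).card := by
    rw [← card_tail_univ]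
    exact (hpart _).symm
  omega

/-- KEY LEMMA (above): if x's component dominates the component of a clean
vertex u, then x's degree is much larger. -/
lemma above_lemma (hT : IsTournament T) (hDESC : IsDESC T A') {C D : Finset V}
    (hC : IsStrongComponent (T \ A') C) (hD : IsStrongComponent (T \ A') D)
    (hdisj : Disjoint C D) {u x : V} (hu : u ∈ C) (hx : x ∈ D)
    (hclean : ∀ a ∈ A', a.1 ≠ u ∧ a.2 ≠ u)
    (harc : ∃ d ∈ D, ∃ c ∈ C, (d, c) ∈ T \ A') :
    2 * outDeg T u + C.card + D.card
      ≤ 2 * outDeg T x + 2 * (A'.filter (fun a => a.2 = x)).card := by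
  have hA : A' ⊆ T := hDESC.1
  set R := (Finset.univ \ C) \ D with hR
  have hnoCD := no_rev_arc hD hC hdisj.symm harc
  have hcleanC : ∀ S : Finset V, S.filter (fun w => (w, u) ∈ A') = ∅ := by
    intro S
    rw [filter_eq_empty_iff]
    intro w _ h
    exact (hclean (w, u) h).2 rfl
  have hcleanC' : ∀ S : Finset V, S.filter (fun w => (u, w) ∈ A') = ∅ := by
    intro S
    rw [filter_eq_empty_iff]
    intro w _ h
    exact (hclean (u, w) h).1 rfl
  have m1 : 2 * (C.filter (fun w => (u, w) ∈ T)).card + 1 = C.card := by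
    have := balance_eq hT hA (hDESC.2 C hC).2 hu
    rw [hcleanC, hcleanC'] at this
    simpa using this
  -- u beats nobody in D
  have m2 : (D.filter (fun w => (u, w) ∈ T)).card = 0 := by
    rw [card_eq_zero, filter_eq_empty_iff]
    intro w hw h
    have huwA : (u, w) ∉ A' := fun hh => (hclean (u, w) hh).1 rfl
    exact hnoCD u hu w hw (mem_sdiff.2 ⟨h, huwA⟩)
  -- x beats almost all of C
  have m3 : C.card ≤ (C.filter (fun w => (x, w) ∈ T)).card
      + (C.filter (fun w => (w, x) ∈ A')).card := by
    calc C.card ≤ ((C.filter (fun w => (x, w) ∈ T)) ∪ (C.filter (fun w => (w, x) ∈ A'))).card := by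
          apply card_le_card
          intro w hw
          rw [mem_union, mem_filter, mem_filter]
          by_cases hxw : (x, w) ∈ T
          · exact Or.inl ⟨hw, hxw⟩
          · have hne : w ≠ x := fun he => (disjoint_left.1 hdisj (he ▸ hw : x ∈ C)) hx
            have hwx : (w, x) ∈ T := (hT.2 w x hne).2 (by simpa using hxw)
            right
            refine ⟨hw, ?_⟩
            by_contra h
            exact hnoCD w hw x hx (mem_sdiff.2 ⟨hwx, h⟩)
      _ ≤ _ := card_union_le _ _
  have m4 := balance_eq hT hA (hDESC.2 D hD).2 hx
  have m5 : (R.filter (fun w => (u, w) ∈ T)).card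
      ≤ (R.filter (fun w => (x, w) ∈ T)).card + (R.filter (fun w => (w, x) ∈ A')).card := by
    calc (R.filter (fun w => (u, w) ∈ T)).card
        ≤ ((R.filter (fun w => (x, w) ∈ T)) ∪ (R.filter (fun w => (w, x) ∈ A'))).card := by
          apply card_le_card
          intro w hw
          simp only [mem_filter] at hw
          rw [mem_union, mem_filter, mem_filter]
          by_cases hxw : (x, w) ∈ T
          · exact Or.inl ⟨hw.1, hxw⟩
          · right
            refine ⟨hw.1, ?_⟩
            have hwR := hw.1
            rw [hR] at hwR
            simp only [mem_sdiff, Finset.mem_univ, true_and] at hwR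
            have hne : w ≠ x := fun he => hwR.2 (he ▸ hx)
            have hwx : (w, x) ∈ T := (hT.2 w x hne).2 (by simpa using hxw)
            by_contra h
            have huwA : (u, w) ∉ A' := fun hh => (hclean (u, w) hh).1 rfl
            obtain ⟨E, hwE, hE⟩ := exists_comp_vertex (T \ A') w
            obtain ⟨d1, hd1, c1, hc1, h1⟩ := harc
            -- cycle D → C → E → D collapses into D
            have habs := absorb3 hD hC.2.1 hE.2.1 hd1 hc1 hu hwE hwE hx h1
              (mem_sdiff.2 ⟨hw.2, huwA⟩) (mem_sdiff.2 ⟨hwx, h⟩)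
            obtain ⟨y, hy⟩ := hC.1
            exact (disjoint_left.1 hdisj hy) (habs.1 hy)
      _ ≤ _ := card_union_le _ _
  have hpart := card_filter_univ3 (univ_eq_CDR hdisj) hdisj (disj_C_R (D := D))
    (disj_D_R (C := C))
  have du : outDeg T u = (C.filter (fun w => (u, w) ∈ T)).card
      + (D.filter (fun w => (u, w) ∈ T)).card + (R.filter (fun w => (u, w) ∈ T)).card := by
    rw [outDeg_filter]; exact hpart _
  have dx : outDeg T x = (C.filter (fun w => (x, w) ∈ T)).card
      + (D.filter (fun w => (x, w) ∈ T)).card + (R.filter (fun w => (x, w) ∈ T)).card := by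
    rw [outDeg_filter]; exact hpart _
  have hbud : (C.filter (fun w => (w, x) ∈ A')).card + (D.filter (fun w => (w, x) ∈ A')).card
      + (R.filter (fun w => (w, x) ∈ A')).card = (A'.filter (fun a => a.2 = x)).card := by
    rw [← card_head_univ]
    exact (hpart _).symm
  omega

/-- exact degree formula for a clean vertex of a strong component -/
lemma clean_deg (hT : IsTournament T) (hDESC : IsDESC T A') {C : Finset V}
    (hC : IsStrongComponent (T \ A') C) {u : V} (hu : u ∈ C)
    (hclean : ∀ a ∈ A', a.1 ≠ u ∧ a.2 ≠ u) :
    2 * outDeg T u + 1 = C.card + 2 * (W1 (T \ A') C).card := by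
  have hA : A' ⊆ T := hDESC.1
  have hcleanC : ∀ S : Finset V, S.filter (fun w => (w, u) ∈ A') = ∅ := by
    intro S
    rw [filter_eq_empty_iff]
    intro w _ h
    exact (hclean (w, u) h).2 rfl
  have hcleanC' : ∀ S : Finset V, S.filter (fun w => (u, w) ∈ A') = ∅ := by
    intro S
    rw [filter_eq_empty_iff]
    intro w _ h
    exact (hclean (u, w) h).1 rfl
  have n1 : 2 * (C.filter (fun w => (u, w) ∈ T)).card + 1 = C.card := by
    have := balance_eq hT hA (hDESC.2 C hC).2 hu
    rw [hcleanC, hcleanC'] at this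
    simpa using this
  have n2 : ((W1 (T \ A') C).filter (fun w => (u, w) ∈ T)).card = (W1 (T \ A') C).card := by
    congr 1
    rw [filter_eq_self]
    intro w hw
    obtain ⟨hwC, hno⟩ := mem_W1.1 hw
    have hne : w ≠ u := fun he => hwC (he ▸ hu)
    by_contra h
    have hwu : (w, u) ∈ T := (hT.2 w u hne).2 (by simpa using h)
    have hwuA : (w, u) ∉ A' := fun hh => (hclean (w, u) hh).2 rfl
    exact hno u hu (mem_sdiff.2 ⟨hwu, hwuA⟩)
  have n3 : ((Zc (T \ A') C).filter (fun w => (u, w) ∈ T)).card = 0 := by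
    rw [card_eq_zero, filter_eq_empty_iff]
    intro w hw h
    have huwA : (u, w) ∉ A' := fun hh => (hclean (u, w) hh).1 rfl
    exact no_arc_to_Z hC hw u hu (mem_sdiff.2 ⟨h, huwA⟩)
  have hpart := card_filter_univ3 (univ_eq_CWZ (T \ A') C) (disj_C_W1 (T \ A') C)
    (disj_C_Zc (T \ A') C) (disj_W1_Zc (T \ A') C)
  have du : outDeg T u = (C.filter (fun w => (u, w) ∈ T)).card
      + ((W1 (T \ A') C).filter (fun w => (u, w) ∈ T)).card
      + ((Zc (T \ A') C).filter (fun w => (u, w) ∈ T)).card := by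
    rw [outDeg_filter]; exact hpart _
  omega

lemma arith_claim2 {k q nb na : ℕ} (hq : q = nb + na) (hq2k : q ≤ 2*k)
    (h1 : nb*(2*k+4) ≤ 2*k + nb*q) (h2 : na*(2*k+4) ≤ 2*k + na*q) : q = 0 := by
  by_contra hq0
  have key : ∀ b : ℕ, 1 ≤ b → q ≤ 2*b → b*(2*k+4) ≤ 2*k + b*q → False := by
    intro b hb1 hbq hineq
    by_cases hbk : b ≤ k+1
    · have h' : b*(2*k+4) ≤ 2*k + 2*(b*b) := by
        calc b*(2*k+4) ≤ 2*k + b*q := hineq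
          _ ≤ 2*k + b*(2*b) := by
              have := Nat.mul_le_mul_left b hbq
              omega
          _ = 2*k + 2*(b*b) := by ring_nf
      zify at h' hb1 hbk
      nlinarith [mul_nonneg (by linarith : (0:ℤ) ≤ (b:ℤ) - 1) (by linarith : (0:ℤ) ≤ (k:ℤ) + 1 - b)]
    · have hbk2 : k+2 ≤ b := by omega
      have h' : b*(2*k+4) ≤ 2*k + b*(2*k) := by
        calc b*(2*k+4) ≤ 2*k + b*q := hineq
          _ ≤ 2*k + b*(2*k) := by
              have := Nat.mul_le_mul_left b hq2k
              omega
      nlinarith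
  rcases le_total na nb with h | h
  · exact key nb (by omega) (by omega) h1
  · exact key na (by omega) (by omega) h2

end Main
end StmtProof

open StmtProof Finset

theorem stmt11 {V : Type*} [Fintype V] [DecidableEq V]
    (T A' : Finset (V × V)) (k : ℕ)
    (hT : IsTournament T) (hDESC : IsDESC T A') (hk : A'.card ≤ k)
    (X : Finset V) (hXne : X.Nonempty) (hcard : 4 * k + 3 ≤ X.card)
    (hdeg : ((X.image fun x => (outDeg T x : ℤ)).max' (hXne.image _))
              - ((X.image fun x => (outDeg T x : ℤ)).min' (hXne.image _)) ≤ k)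
    (hout : ∀ v : V, v ∉ X →
      ((X.image fun x => (outDeg T x : ℤ)).min' (hXne.image _)) + k < (outDeg T v : ℤ) ∨
      (outDeg T v : ℤ) < ((X.image fun x => (outDeg T x : ℤ)).max' (hXne.image _)) - k) :
    IsStrongComponent (T \ A') X := by
  classical
  have hA : A' ⊆ T := hDESC.1
  set MinI := ((X.image fun x => (outDeg T x : ℤ)).min' (hXne.image _)) with hMinI
  set MaxI := ((X.image fun x => (outDeg T x : ℤ)).max' (hXne.image _)) with hMaxI
  have hleMax : ∀ y ∈ X, (outDeg T y : ℤ) ≤ MaxI := by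
    intro y hy
    rw [hMaxI]
    exact Finset.le_max' _ _ (Finset.mem_image_of_mem (fun x => (outDeg T x : ℤ)) hy)
  have hMinle : ∀ y ∈ X, MinI ≤ (outDeg T y : ℤ) := by
    intro y hy
    rw [hMinI]
    exact Finset.min'_le _ _ (Finset.mem_image_of_mem (fun x => (outDeg T x : ℤ)) hy)
  have window : ∀ y ∈ X, ∀ z ∈ X, outDeg T y ≤ outDeg T z + k := by
    intro y hy z hz
    have h1 := hleMax y hy
    have h2 := hMinle z hz
    have : (outDeg T y : ℤ) ≤ (outDeg T z : ℤ) + k := by linarith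
    exact_mod_cast this
  -- PART B: any strong component containing X equals X
  have partB : ∀ C : Finset V, IsStrongComponent (T \ A') C → X ⊆ C → C = X := by
    intro C hC hXC
    apply Finset.Subset.antisymm _ hXC
    intro v hv
    by_contra hvX
    have hkz : (A'.card : ℤ) ≤ k := by exact_mod_cast hk
    rcases hout v hvX with hcase | hcase
    · obtain ⟨u0, hu0X, hu0⟩ : ∃ u0 ∈ X, (outDeg T u0 : ℤ) = MinI := by
        have h := Finset.min'_mem (X.image fun x => (outDeg T x : ℤ)) (hXne.image _)
        rw [← hMinI, Finset.mem_image] at h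
        obtain ⟨u0, h1, h2⟩ := h
        exact ⟨u0, h1, h2⟩
      have hst := deg_stab hT hDESC hC hv (hXC hu0X)
      have hstz : (2 * outDeg T v : ℤ) ≤ 2 * outDeg T u0 + 2 * A'.card := by exact_mod_cast hst
      rw [hu0] at hstz
      linarith
    · obtain ⟨u1, hu1X, hu1⟩ : ∃ u1 ∈ X, (outDeg T u1 : ℤ) = MaxI := by
        have h := Finset.max'_mem (X.image fun x => (outDeg T x : ℤ)) (hXne.image _)
        rw [← hMaxI, Finset.mem_image] at h
        obtain ⟨u1, h1, h2⟩ := h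
        exact ⟨u1, h1, h2⟩
      have hst := deg_stab hT hDESC hC (hXC hu1X) hv
      have hstz : (2 * outDeg T u1 : ℤ) ≤ 2 * outDeg T v + 2 * A'.card := by exact_mod_cast hst
      rw [hu1] at hstz
      linarith
  -- clean vertices
  set cleanX := X.filter (fun x => ∀ a ∈ A', a.1 ≠ x ∧ a.2 ≠ x) with hcleanXdef
  have hdirty : (X \ cleanX).card ≤ 2 * k := by
    have hsub : X \ cleanX ⊆ A'.image Prod.fst ∪ A'.image Prod.snd := by
      intro x hx
      rw [mem_sdiff] at hx
      obtain ⟨hxX, hxn⟩ := hx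
      rw [hcleanXdef, mem_filter] at hxn
      push_neg at hxn
      obtain ⟨a, ha, hax⟩ := hxn hxX
      rw [Finset.mem_union]
      by_cases h : a.1 = x
      · exact Or.inl (Finset.mem_image.2 ⟨a, ha, h⟩)
      · exact Or.inr (Finset.mem_image.2 ⟨a, ha, hax h⟩)
    calc (X \ cleanX).card ≤ _ := card_le_card hsub
      _ ≤ (A'.image Prod.fst).card + (A'.image Prod.snd).card := card_union_le _ _
      _ ≤ A'.card + A'.card := Nat.add_le_add card_image_le card_image_le
      _ ≤ 2 * k := by omega
  have hcsub : cleanX ⊆ X := filter_subset _ _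
  have hsplit : (X \ cleanX).card + cleanX.card = X.card := card_sdiff_add_card_eq_card hcsub
  have hbig : 2 * k + 3 ≤ cleanX.card := by omega
  have hclne : cleanX.Nonempty := card_pos.1 (by omega)
  obtain ⟨u, huc, humax⟩ := Finset.exists_max_image cleanX (fun y => outDeg T y) hclne
  obtain ⟨u', hu'c, hu'min⟩ := Finset.exists_min_image cleanX (fun y => outDeg T y) hclne
  have hucl : ∀ a ∈ A', a.1 ≠ u ∧ a.2 ≠ u := (mem_filter.1 huc).2
  have hu'cl : ∀ a ∈ A', a.1 ≠ u' ∧ a.2 ≠ u' := (mem_filter.1 hu'c).2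
  have hucX : u ∈ X := (mem_filter.1 huc).1
  have hu'cX : u' ∈ X := (mem_filter.1 hu'c).1
  obtain ⟨C, huC, hCc⟩ := exists_comp_vertex (T \ A') u
  obtain ⟨C', hu'C', hC'c⟩ := exists_comp_vertex (T \ A') u'
  have tail0 : ∀ y : V, (∀ a ∈ A', a.1 ≠ y ∧ a.2 ≠ y) → (A'.filter (fun a => a.1 = y)) = ∅ := by
    intro y hy; rw [filter_eq_empty_iff]; intro a ha h; exact (hy a ha).1 h
  have head0 : ∀ y : V, (∀ a ∈ A', a.1 ≠ y ∧ a.2 ≠ y) → (A'.filter (fun a => a.2 = y)) = ∅ := by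
    intro y hy; rw [filter_eq_empty_iff]; intro a ha h; exact (hy a ha).2 h
  have comp_dd : ∀ (E F : Finset V), IsStrongComponent (T \ A') E →
      IsStrongComponent (T \ A') F → ∀ y, y ∈ E → y ∉ F → Disjoint E F := by
    intro E F hE hF y hyE hyF
    rw [Finset.disjoint_left]
    intro a haE haF
    exact hyF ((comp_unique hE hF haE haF) ▸ hyE)
  -- no clean vertex's component can send a T'-arc into C (comp of the max clean vertex)
  have no_arc_into_C : ∀ y ∈ cleanX, ∀ E : Finset V, IsStrongComponent (T \ A') E → y ∈ E →
      Disjoint C E → ¬ (∃ d ∈ E, ∃ c ∈ C, (d, c) ∈ T \ A') := by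
    intro y hyc E hE hyE hdisj harc
    have hab := above_lemma hT hDESC hCc hE hdisj huC hyE hucl harc
    rw [head0 y (mem_filter.1 hyc).2] at hab
    have h1 : outDeg T y ≤ outDeg T u := humax y hyc
    have h2 : 1 ≤ C.card := card_pos.2 ⟨u, huC⟩
    have h3 : 1 ≤ E.card := card_pos.2 ⟨y, hyE⟩
    simp only [card_empty, Nat.mul_zero, Nat.add_zero] at hab
    omega
  -- no clean vertex's component can receive a T'-arc from C' (comp of the min clean vertex)
  have no_arc_from_C' : ∀ y ∈ cleanX, ∀ E : Finset V, IsStrongComponent (T \ A') E → y ∈ E →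
      Disjoint C' E → ¬ (∃ c ∈ C', ∃ d ∈ E, (c, d) ∈ T \ A') := by
    intro y hyc E hE hyE hdisj harc
    have hbe := below_lemma hT hDESC hC'c hE hdisj hu'C' hyE hu'cl harc
    rw [tail0 y (mem_filter.1 hyc).2] at hbe
    have h1 : outDeg T u' ≤ outDeg T y := hu'min y hyc
    have h2 : 1 ≤ C'.card := card_pos.2 ⟨u', hu'C'⟩
    have h3 : 1 ≤ E.card := card_pos.2 ⟨y, hyE⟩
    simp only [card_empty, Nat.mul_zero, Nat.add_zero] at hbe
    omega
  -- CLAIM 1a: the components of the max and min clean vertices coincide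
  have hCC' : C = C' := by
    by_contra hne
    have hdisj : Disjoint C C' := by
      apply comp_dd C C' hCc hC'c u huC
      intro huC'
      exact hne (comp_unique hCc hC'c huC huC')
    have hne_uu' : u ≠ u' := fun he => (Finset.disjoint_left.1 hdisj huC) (he ▸ hu'C')
    have harcCD : (u, u') ∈ T \ A' := by
      by_cases h : (u, u') ∈ T
      · exact mem_sdiff.2 ⟨h, fun hh => (hucl _ hh).1 rfl⟩
      · exfalso
        have h2 : (u', u) ∈ T := (hT.2 u' u (Ne.symm hne_uu')).2 (by simpa using h)
        exact no_arc_into_C u' hu'c C' hC'c hu'C' hdisj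
          ⟨u', hu'C', u, huC, mem_sdiff.2 ⟨h2, fun hh => (hucl _ hh).2 rfl⟩⟩
    have harcE : ∃ c ∈ C, ∃ d ∈ C', (c, d) ∈ T \ A' := ⟨u, huC, u', hu'C', harcCD⟩
    have hnoC'C := no_rev_arc hCc hC'c hdisj harcE
    have hi := below_lemma hT hDESC hCc hC'c hdisj huC hu'C' hucl harcE
    rw [tail0 u' hu'cl] at hi
    simp only [card_empty, Nat.mul_zero, Nat.add_zero] at hi
    have equ := clean_deg hT hDESC hCc huC hucl
    have equ' := clean_deg hT hDESC hC'c hu'C' hu'cl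
    set W := W1 (T \ A') C with hW
    set W' := W1 (T \ A') C' with hW'
    set B2 := cleanX \ (C ∪ C') with hB2
    have haa : C' ⊆ W := by
      intro c' hc'
      rw [hW, mem_W1]
      exact ⟨fun hc => (Finset.disjoint_left.1 hdisj hc) hc', fun c hc => hnoC'C c' hc' c hc⟩
    have hbb : W' \ C ⊆ W := by
      intro z hz
      rw [mem_sdiff] at hz
      obtain ⟨hzW', hzC⟩ := hz
      rw [hW', mem_W1] at hzW'
      obtain ⟨hzC', hno'⟩ := hzW'
      rw [hW, mem_W1]
      refine ⟨hzC, fun c hc harc => ?_⟩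
      have hne_zu' : z ≠ u' := fun he => hzC' (he ▸ hu'C')
      by_cases hzu' : (z, u') ∈ T
      · exact hno' u' hu'C' (mem_sdiff.2 ⟨hzu', fun hh => (hu'cl _ hh).2 rfl⟩)
      · have h2 : (u', z) ∈ T := (hT.2 u' z (Ne.symm hne_zu')).2 (by simpa using hzu')
        have h2A : (u', z) ∉ A' := fun hh => (hu'cl _ hh).1 rfl
        obtain ⟨E, hzE, hE⟩ := exists_comp_vertex (T \ A') z
        have habs := absorb3 hCc hC'c.2.1 hE.2.1 huC hu'C' hu'C' hzE hzE hc harcCD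
          (mem_sdiff.2 ⟨h2, h2A⟩) harc
        exact (Finset.disjoint_left.1 hdisj (habs.1 hu'C')) hu'C'
    have hcc : B2 ⊆ W := by
      intro y hy
      rw [hB2, mem_sdiff, Finset.mem_union] at hy
      push_neg at hy
      obtain ⟨hyc, hyC, hyC'⟩ := hy
      rw [hW, mem_W1]
      refine ⟨hyC, fun c hc harc => ?_⟩
      obtain ⟨E, hyE, hE⟩ := exists_comp_vertex (T \ A') y
      have hdisjE : Disjoint C E := (comp_dd E C hE hCc y hyE hyC).symm
      exact no_arc_into_C y hyc E hE hyE hdisjE ⟨y, hyE, c, hc, harc⟩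
    have hB2W' : ∀ y ∈ B2, y ∉ W' := by
      intro y hy
      rw [hB2, mem_sdiff, Finset.mem_union] at hy
      push_neg at hy
      obtain ⟨hyc, hyC, hyC'⟩ := hy
      intro hyW'
      rw [hW', mem_W1] at hyW'
      have hne_yu' : y ≠ u' := fun he => hyC' (he ▸ hu'C')
      by_cases h : (y, u') ∈ T
      · exact hyW'.2 u' hu'C'
          (mem_sdiff.2 ⟨h, fun hh => ((mem_filter.1 hyc).2 _ hh).1 rfl⟩)
      · have h2 : (u', y) ∈ T := (hT.2 u' y (Ne.symm hne_yu')).2 (by simpa using h)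
        have h2A : (u', y) ∉ A' := fun hh => (hu'cl _ hh).1 rfl
        obtain ⟨E, hyE, hE⟩ := exists_comp_vertex (T \ A') y
        have hdisjE : Disjoint C' E := (comp_dd E C' hE hC'c y hyE hyC').symm
        exact no_arc_from_C' y hyc E hE hyE hdisjE
          ⟨u', hu'C', y, hyE, mem_sdiff.2 ⟨h2, h2A⟩⟩
    have hdisj1 : Disjoint C' (W' \ C) := by
      rw [Finset.disjoint_left]
      intro a ha ha2
      rw [mem_sdiff, hW', mem_W1] at ha2
      exact ha2.1.1 ha
    have hdisj2 : Disjoint (C' ∪ (W' \ C)) B2 := by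
      rw [Finset.disjoint_right]
      intro a haB2 haU
      rcases Finset.mem_union.1 haU with h | h
      · rw [hB2, mem_sdiff] at haB2
        exact haB2.2 (Finset.mem_union.2 (Or.inr h))
      · exact hB2W' a haB2 ((mem_sdiff.1 h).1)
    have hWge : C'.card + (W' \ C).card + B2.card ≤ W.card := by
      have hsub : C' ∪ (W' \ C) ∪ B2 ⊆ W := by
        intro a ha
        rcases Finset.mem_union.1 ha with h | h
        · rcases Finset.mem_union.1 h with h' | h'
          · exact haa h'
          · exact hbb h'
        · exact hcc h
      calc C'.card + (W' \ C).card + B2.card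
          = (C' ∪ (W' \ C) ∪ B2).card := by
            rw [card_union_of_disjoint hdisj2, card_union_of_disjoint hdisj1]
        _ ≤ W.card := card_le_card hsub
    have hW'split : (W' ∩ C).card + (W' \ C).card = W'.card := card_inter_add_card_sdiff _ _
    have hWC' : (W' ∩ C).card + (cleanX ∩ C).card ≤ C.card := by
      have hd : Disjoint (W' ∩ C) (cleanX ∩ C) := by
        rw [Finset.disjoint_left]
        intro a ha hb
        obtain ⟨haW', haC⟩ := Finset.mem_inter.1 ha
        obtain ⟨hacl, _⟩ := Finset.mem_inter.1 hb
        have hne_au' : a ≠ u' := fun he => (Finset.disjoint_left.1 hdisj haC) (he ▸ hu'C')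
        rw [hW', mem_W1] at haW'
        by_cases h : (a, u') ∈ T
        · exact haW'.2 u' hu'C'
            (mem_sdiff.2 ⟨h, fun hh => ((mem_filter.1 hacl).2 _ hh).1 rfl⟩)
        · have h2 : (u', a) ∈ T := (hT.2 u' a (Ne.symm hne_au')).2 (by simpa using h)
          have h2A : (u', a) ∉ A' := fun hh => (hu'cl _ hh).1 rfl
          exact hnoC'C u' hu'C' a haC (mem_sdiff.2 ⟨h2, h2A⟩)
      calc (W' ∩ C).card + (cleanX ∩ C).card = ((W' ∩ C) ∪ (cleanX ∩ C)).card :=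
            (card_union_of_disjoint hd).symm
        _ ≤ C.card := by
            apply card_le_card
            intro a ha
            rcases Finset.mem_union.1 ha with h | h
            · exact (Finset.mem_inter.1 h).2
            · exact (Finset.mem_inter.1 h).2
    have hcleansplit : cleanX.card ≤ (cleanX ∩ C).card + C'.card + B2.card := by
      have hsub : cleanX ⊆ (cleanX ∩ C) ∪ (cleanX ∩ C') ∪ B2 := by
        intro a ha
        by_cases h1 : a ∈ C
        · exact Finset.mem_union.2
            (Or.inl (Finset.mem_union.2 (Or.inl (Finset.mem_inter.2 ⟨ha, h1⟩))))
        · by_cases h2 : a ∈ C'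
          · exact Finset.mem_union.2
              (Or.inl (Finset.mem_union.2 (Or.inr (Finset.mem_inter.2 ⟨ha, h2⟩))))
          · refine Finset.mem_union.2 (Or.inr ?_)
            rw [hB2, mem_sdiff]
            exact ⟨ha, by simp [h1, h2]⟩
      have e1 := card_le_card hsub
      have e2 := card_union_le ((cleanX ∩ C) ∪ (cleanX ∩ C')) B2
      have e3 := card_union_le (cleanX ∩ C) (cleanX ∩ C')
      have e4 : (cleanX ∩ C').card ≤ C'.card := card_le_card Finset.inter_subset_right
      omega
    have hwin : outDeg T u ≤ outDeg T u' + k := window u hucX u' hu'cX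
    omega
  -- CLAIM 1b: all clean vertices lie in C
  have hcleansub : ∀ y ∈ cleanX, y ∈ C := by
    intro y hyc
    by_contra hyC
    obtain ⟨E, hyE, hE⟩ := exists_comp_vertex (T \ A') y
    have hdisjE : Disjoint C E := (comp_dd E C hE hCc y hyE hyC).symm
    have hne_yu : y ≠ u := fun he => hyC (he ▸ huC)
    by_cases h : (y, u) ∈ T
    · have hA' : (y, u) ∉ A' := fun hh => (hucl _ hh).2 rfl
      exact no_arc_into_C y hyc E hE hyE hdisjE ⟨y, hyE, u, huC, mem_sdiff.2 ⟨h, hA'⟩⟩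
    · have h2 : (u, y) ∈ T := (hT.2 u y (Ne.symm hne_yu)).2 (by simpa using h)
      have h2A : (u, y) ∉ A' := fun hh => (hucl _ hh).1 rfl
      have hdisjE' : Disjoint C' E := hCC' ▸ hdisjE
      exact no_arc_from_C' y hyc E hE hyE hdisjE'
        ⟨u, hCC' ▸ huC, y, hyE, mem_sdiff.2 ⟨h2, h2A⟩⟩
  -- CLAIM 2: X ⊆ C
  set q := (X \ C).card with hq
  have hq2k : q ≤ 2 * k := by
    have hsub2 : X \ C ⊆ X \ cleanX := by
      intro y hy
      rw [mem_sdiff] at hy ⊢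
      exact ⟨hy.1, fun hc => hy.2 (hcleansub y hc)⟩
    calc q ≤ (X \ cleanX).card := card_le_card hsub2
      _ ≤ 2 * k := hdirty
  have hC0big : 4 * k + 3 ≤ C.card + q := by
    have e1 := card_inter_add_card_sdiff X C
    have e2 : (X ∩ C).card ≤ C.card := card_le_card Finset.inter_subset_right
    omega
  set Bset := (X \ C).filter (fun x => (u, x) ∈ T) with hBsetdef
  set Aset := (X \ C) \ Bset with hAsetdef
  have hqsplit : q = Bset.card + Aset.card := by
    have hsubB : Bset ⊆ X \ C := by
      rw [hBsetdef]; exact filter_subset _ _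
    have e := card_sdiff_add_card_eq_card hsubB
    rw [← hAsetdef, ← hq] at e
    omega
  have hBbound : ∀ x ∈ Bset, C.card + 1 ≤ 2 * (A'.filter (fun a => a.1 = x)).card + 2 * k := by
    intro x hx
    rw [hBsetdef, mem_filter, mem_sdiff] at hx
    obtain ⟨⟨hxX, hxC⟩, hux⟩ := hx
    obtain ⟨E, hxE, hE⟩ := exists_comp_vertex (T \ A') x
    have hdisjE : Disjoint C E := (comp_dd E C hE hCc x hxE hxC).symm
    have huxA : (u, x) ∉ A' := fun hh => (hucl _ hh).1 rfl
    have hb := below_lemma hT hDESC hCc hE hdisjE huC hxE hucl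
      ⟨u, huC, x, hxE, mem_sdiff.2 ⟨hux, huxA⟩⟩
    have hwin := window u hucX x hxX
    have hEpos : 1 ≤ E.card := card_pos.2 ⟨x, hxE⟩
    omega
  have hAbound : ∀ x ∈ Aset, C.card + 1 ≤ 2 * (A'.filter (fun a => a.2 = x)).card + 2 * k := by
    intro x hx
    rw [hAsetdef, mem_sdiff, hBsetdef, mem_filter] at hx
    obtain ⟨hx1, hx2⟩ := hx
    rw [mem_sdiff] at hx1
    obtain ⟨hxX, hxC⟩ := hx1
    have hnux : (u, x) ∉ T := fun h => hx2 ⟨mem_sdiff.2 ⟨hxX, hxC⟩, h⟩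
    have hne : x ≠ u := fun he => hxC (he ▸ huC)
    have hxu : (x, u) ∈ T := (hT.2 x u hne).2 (by simpa using hnux)
    have hxuA : (x, u) ∉ A' := fun hh => (hucl _ hh).2 rfl
    obtain ⟨E, hxE, hE⟩ := exists_comp_vertex (T \ A') x
    have hdisjE : Disjoint C E := (comp_dd E C hE hCc x hxE hxC).symm
    have hb := above_lemma hT hDESC hCc hE hdisjE huC hxE hucl
      ⟨x, hxE, u, huC, mem_sdiff.2 ⟨hxu, hxuA⟩⟩
    have hwin := window x hxX u hucX
    have hEpos : 1 ≤ E.card := card_pos.2 ⟨x, hxE⟩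
    omega
  have hBsum : Bset.card * (C.card + 1) ≤ 2 * A'.card + 2 * k * Bset.card := by
    have e1 : Bset.card • (C.card + 1)
        ≤ ∑ x ∈ Bset, (2 * (A'.filter (fun a => a.1 = x)).card + 2 * k) :=
      Finset.card_nsmul_le_sum _ _ _ hBbound
    rw [smul_eq_mul] at e1
    have e2 : ∑ x ∈ Bset, (2 * (A'.filter (fun a => a.1 = x)).card + 2 * k)
        = 2 * (∑ x ∈ Bset, (A'.filter (fun a => a.1 = x)).card) + 2 * k * Bset.card := by
      rw [Finset.sum_add_distrib, Finset.sum_const, ← Finset.mul_sum, smul_eq_mul]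
      ring
    have e3 := sum_tails (A' := A') Bset
    omega
  have hAsum : Aset.card * (C.card + 1) ≤ 2 * A'.card + 2 * k * Aset.card := by
    have e1 : Aset.card • (C.card + 1)
        ≤ ∑ x ∈ Aset, (2 * (A'.filter (fun a => a.2 = x)).card + 2 * k) :=
      Finset.card_nsmul_le_sum _ _ _ hAbound
    rw [smul_eq_mul] at e1
    have e2 : ∑ x ∈ Aset, (2 * (A'.filter (fun a => a.2 = x)).card + 2 * k)
        = 2 * (∑ x ∈ Aset, (A'.filter (fun a => a.2 = x)).card) + 2 * k * Aset.card := by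
      rw [Finset.sum_add_distrib, Finset.sum_const, ← Finset.mul_sum, smul_eq_mul]
      ring
    have e3 := sum_heads (A' := A') Aset
    omega
  have hq0 : q = 0 := by
    apply arith_claim2 hqsplit hq2k
    · -- Bset side
      have e0 : Bset.card * (4 * k + 4) ≤ Bset.card * (C.card + 1 + q) :=
        Nat.mul_le_mul_left _ (by omega)
      have e1 : Bset.card * (C.card + 1 + q) = Bset.card * (C.card + 1) + Bset.card * q := by
        ring
      have e2 : Bset.card * (4 * k + 4) = Bset.card * (2 * k + 4) + Bset.card * (2 * k) := by
        ring
      have e3 : 2 * k * Bset.card = Bset.card * (2 * k) := by ring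
      have hkk : A'.card ≤ k := hk
      linarith [hBsum]
    · have e0 : Aset.card * (4 * k + 4) ≤ Aset.card * (C.card + 1 + q) :=
        Nat.mul_le_mul_left _ (by omega)
      have e1 : Aset.card * (C.card + 1 + q) = Aset.card * (C.card + 1) + Aset.card * q := by
        ring
      have e2 : Aset.card * (4 * k + 4) = Aset.card * (2 * k + 4) + Aset.card * (2 * k) := by
        ring
      have e3 : 2 * k * Aset.card = Aset.card * (2 * k) := by ring
      have hkk : A'.card ≤ k := hk
      linarith [hAsum]
  have hXC : X ⊆ C := by
    rw [hq, card_eq_zero, sdiff_eq_empty_iff_subset] at hq0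
    exact hq0
  have hfinal := partB C hCc hXC
  refine ⟨hXne, ?_, ?_⟩
  · rw [← hfinal]
    exact hCc.2.1
  · intro Y hXY hY
    obtain ⟨Cy, hYCy, hCyc⟩ := exists_comp (hXne.mono hXY) hY
    have hCyX := partB Cy hCyc (hXY.trans hYCy)
    exact Finset.Subset.antisymm (hCyX ▸ hYCy) hXY
end

section
/- Let T be a tournament on a finite vertex set, let k be a nonnegative integer, let A' be a DESC-set of T with |A'| ≤ k, and let T' = T − A'. Let A and B be distinct strong components of T' such that there is a directed path in T' from some vertex of A to some vertex of B. Then for every vertex a of A and every vertex b of B, d⁺_T(a) − d⁺_T(b) ≥ (|A| + |B|)/2 − (k + 1); in particular d⁺_T(b) − d⁺_T(a) ≤ k. -/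
open DescPaper

set_option linter.unusedSectionVars false

section Aux
open DescPaper
variable {V : Type*} [Fintype V] [DecidableEq V]

lemma reach_mono {D E : Finset (V × V)} (h : D ⊆ E) {x y : V} (hr : Reach D x y) :
    Reach E x y := Relation.ReflTransGen.mono (fun _ _ huv => h huv) x y hr

lemma induce_subset (D : Finset (V × V)) (X : Finset V) : induce D X ⊆ D :=
  Finset.filter_subset _ _

lemma reach_induce_mutual (D : Finset (V × V)) (x : V)
    [DecidablePred (fun z => Reach D x z ∧ Reach D z x)]
    (u v : V) (huv : Reach D u v) (hxu : Reach D x u) (hvx : Reach D v x) :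
    Reach (induce D (Finset.univ.filter (fun z => Reach D x z ∧ Reach D z x))) u v := by
  induction huv using Relation.ReflTransGen.head_induction_on with
  | refl => exact .refl
  | @head p q harc hrest ih =>
      have hxq : Reach D x q := hxu.trans (Relation.ReflTransGen.single harc)
      have hqx : Reach D q x := hrest.trans hvx
      have hpx : Reach D p x := (Relation.ReflTransGen.single harc).trans hqx
      have hp : p ∈ Finset.univ.filter (fun z => Reach D x z ∧ Reach D z x) :=
        Finset.mem_filter.mpr ⟨Finset.mem_univ _, hxu, hpx⟩
      have hq : q ∈ Finset.univ.filter (fun z => Reach D x z ∧ Reach D z x) :=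
        Finset.mem_filter.mpr ⟨Finset.mem_univ _, hxq, hqx⟩
      exact Relation.ReflTransGen.head (Finset.mem_filter.mpr ⟨harc, hp, hq⟩) (ih hxq)

lemma mem_of_mutual_reach {D : Finset (V × V)} {A : Finset V} (hA : IsStrongComponent D A)
    {x y : V} (hx : x ∈ A) (hxy : Reach D x y) (hyx : Reach D y x) : y ∈ A := by
  classical
  have hAS : A ⊆ Finset.univ.filter (fun z => Reach D x z ∧ Reach D z x) :=
    fun c hc => Finset.mem_filter.mpr ⟨Finset.mem_univ _,
      reach_mono (induce_subset D A) (hA.2.1 x hx c hc),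
      reach_mono (induce_subset D A) (hA.2.1 c hc x hx)⟩
  have hSC : StronglyConnectedOn D (Finset.univ.filter (fun z => Reach D x z ∧ Reach D z x)) := by
    intro u hu v hv
    obtain ⟨-, hxu, hux⟩ := Finset.mem_filter.mp hu
    obtain ⟨-, hxv, hvx⟩ := Finset.mem_filter.mp hv
    exact reach_induce_mutual D x u v (hux.trans hxv) hxu hvx
  have hEq := hA.2.2 _ hAS hSC
  rw [← hEq]
  exact Finset.mem_filter.mpr ⟨Finset.mem_univ _, hxy, hyx⟩

lemma card_head (S : Finset (V × V)) (x : V) (Y : Finset V) :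
    (Y.filter (fun y => (x, y) ∈ S)).card = (S.filter (fun p => p.1 = x ∧ p.2 ∈ Y)).card := by
  apply Finset.card_bij' (fun y _ => (x, y)) (fun p _ => p.2)
  · intro y hy
    obtain ⟨hy1, hy2⟩ := Finset.mem_filter.mp hy
    exact Finset.mem_filter.mpr ⟨hy2, rfl, hy1⟩
  · intro p hp
    obtain ⟨hp1, hp2, hp3⟩ := Finset.mem_filter.mp hp
    exact Finset.mem_filter.mpr ⟨hp3, by rw [← hp2]; exact hp1⟩
  · intro y _; rfl
  · intro p hp
    obtain ⟨_, hp2, _⟩ := Finset.mem_filter.mp hp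
    exact Prod.ext hp2.symm rfl

lemma card_tail (S : Finset (V × V)) (x : V) (Y : Finset V) :
    (Y.filter (fun y => (y, x) ∈ S)).card = (S.filter (fun p => p.2 = x ∧ p.1 ∈ Y)).card := by
  apply Finset.card_bij' (fun y _ => (y, x)) (fun p _ => p.1)
  · intro y hy
    obtain ⟨hy1, hy2⟩ := Finset.mem_filter.mp hy
    exact Finset.mem_filter.mpr ⟨hy2, rfl, hy1⟩
  · intro p hp
    obtain ⟨hp1, hp2, hp3⟩ := Finset.mem_filter.mp hp
    exact Finset.mem_filter.mpr ⟨hp3, by rw [← hp2]; exact hp1⟩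
  · intro y _; rfl
  · intro p hp
    obtain ⟨_, hp2, _⟩ := Finset.mem_filter.mp hp
    exact Prod.ext rfl hp2.symm

lemma outDeg_eq (T : Finset (V × V)) (x : V) :
    outDeg T x = (Finset.univ.filter (fun y => (x, y) ∈ T)).card := by
  rw [card_head]
  unfold outDeg
  congr 1
  apply Finset.filter_congr
  intro p _
  simp

lemma outDeg_induce (D : Finset (V × V)) {X : Finset V} {x : V} (hx : x ∈ X) :
    outDeg (induce D X) x = (X.filter (fun y => (x, y) ∈ D)).card := by
  rw [card_head]
  unfold outDeg induce
  rw [Finset.filter_filter]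
  congr 1
  apply Finset.filter_congr
  intro p _
  constructor
  · rintro ⟨⟨_, h2⟩, h3⟩; exact ⟨h3, h2⟩
  · rintro ⟨h3, h2⟩; exact ⟨⟨by rw [h3]; exact hx, h2⟩, h3⟩

lemma inDeg_induce (D : Finset (V × V)) {X : Finset V} {x : V} (hx : x ∈ X) :
    inDeg (induce D X) x = (X.filter (fun y => (y, x) ∈ D)).card := by
  rw [card_tail]
  unfold inDeg induce
  rw [Finset.filter_filter]
  congr 1
  apply Finset.filter_congr
  intro p _
  constructor
  · rintro ⟨⟨h1, _⟩, h3⟩; exact ⟨h3, h1⟩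
  · rintro ⟨h3, h1⟩; exact ⟨⟨h1, by rw [h3]; exact hx⟩, h3⟩

lemma tourn_count {T : Finset (V × V)} (hT : IsTournament T) {X : Finset V} {x : V}
    (hx : x ∈ X) :
    (X.filter (fun y => (x, y) ∈ T)).card + (X.filter (fun y => (y, x) ∈ T)).card + 1
      = X.card := by
  have hdis : Disjoint (X.filter (fun y => (x, y) ∈ T)) (X.filter (fun y => (y, x) ∈ T)) := by
    rw [Finset.disjoint_left]
    intro y h1 h2
    obtain ⟨hy, ht1⟩ := Finset.mem_filter.mp h1
    obtain ⟨-, ht2⟩ := Finset.mem_filter.mp h2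
    by_cases hyx : y = x
    · subst hyx; exact hT.1 y ht1
    · exact ((hT.2 x y (Ne.symm hyx)).mp ht1) ht2
  have hun : (X.filter (fun y => (x, y) ∈ T)) ∪ (X.filter (fun y => (y, x) ∈ T))
      = X.erase x := by
    ext y
    simp only [Finset.mem_union, Finset.mem_filter, Finset.mem_erase]
    constructor
    · rintro (⟨hy, ht⟩ | ⟨hy, ht⟩)
      · exact ⟨by rintro rfl; exact hT.1 y ht, hy⟩
      · exact ⟨by rintro rfl; exact hT.1 y ht, hy⟩
    · rintro ⟨hyx, hy⟩
      by_cases h : (x, y) ∈ T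
      · exact Or.inl ⟨hy, h⟩
      · exact Or.inr ⟨hy, (hT.2 y x hyx).mpr h⟩
  rw [← Finset.card_union_of_disjoint hdis, hun]
  exact Finset.card_erase_add_one hx

lemma card_filter_split {T A' : Finset (V × V)} (hsub : A' ⊆ T) (Y : Finset V)
    (f : V → V × V) :
    (Y.filter (fun y => f y ∈ T)).card
      = (Y.filter (fun y => f y ∈ T \ A')).card + (Y.filter (fun y => f y ∈ A')).card := by
  have heq : Y.filter (fun y => f y ∈ T)
      = Y.filter (fun y => f y ∈ T \ A' ∨ f y ∈ A') := by
    apply Finset.filter_congr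
    intro y _
    constructor
    · intro h
      by_cases hA : f y ∈ A'
      · exact Or.inr hA
      · exact Or.inl (Finset.mem_sdiff.mpr ⟨h, hA⟩)
    · rintro (h | h)
      · exact (Finset.mem_sdiff.mp h).1
      · exact hsub h
  rw [heq, Finset.filter_or]
  apply Finset.card_union_of_disjoint
  rw [Finset.disjoint_left]
  intro y h1 h2
  exact (Finset.mem_sdiff.mp (Finset.mem_filter.mp h1).2).2 (Finset.mem_filter.mp h2).2

lemma card_filter_partition {A B : Finset V} (h : Disjoint A B) (P : V → Prop)
    [DecidablePred P] :
    (Finset.univ.filter P).card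
      = (A.filter P).card + (B.filter P).card
        + ((Finset.univ \ (A ∪ B)).filter P).card := by
  have h1 : (A ∪ B) ∪ (Finset.univ \ (A ∪ B)) = Finset.univ :=
    Finset.union_sdiff_of_subset (Finset.subset_univ _)
  conv_lhs => rw [← h1]
  rw [Finset.filter_union,
    Finset.card_union_of_disjoint (Finset.disjoint_filter_filter Finset.disjoint_sdiff),
    Finset.filter_union, Finset.card_union_of_disjoint (Finset.disjoint_filter_filter h)]

lemma three_filter_le {α : Type*} [DecidableEq α] (I : Finset α) (P Q R : α → Prop)
    [DecidablePred P] [DecidablePred Q] [DecidablePred R]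
    (hPQ : ∀ x, P x → Q x → False) (hPR : ∀ x, P x → R x → False)
    (hQR : ∀ x, Q x → R x → False) :
    (I.filter P).card + (I.filter Q).card + (I.filter R).card ≤ I.card := by
  have d1 : Disjoint (I.filter P) (I.filter Q) := by
    rw [Finset.disjoint_left]
    intro x h1 h2
    exact hPQ x (Finset.mem_filter.mp h1).2 (Finset.mem_filter.mp h2).2
  have d2 : Disjoint (I.filter P ∪ I.filter Q) (I.filter R) := by
    rw [Finset.disjoint_left]
    intro x h1 h2
    rcases Finset.mem_union.mp h1 with h | h
    · exact hPR x (Finset.mem_filter.mp h).2 (Finset.mem_filter.mp h2).2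
    · exact hQR x (Finset.mem_filter.mp h).2 (Finset.mem_filter.mp h2).2
  rw [← Finset.card_union_of_disjoint d1, ← Finset.card_union_of_disjoint d2]
  apply Finset.card_le_card
  intro x hx
  rcases Finset.mem_union.mp hx with h | h
  · rcases Finset.mem_union.mp h with h | h
    · exact Finset.filter_subset _ _ h
    · exact Finset.filter_subset _ _ h
  · exact Finset.filter_subset _ _ h

end Aux

theorem stmt12 {V : Type*} [Fintype V] [DecidableEq V]
    (T A' : Finset (V × V)) (k : ℕ)
    (hT : IsTournament T) (hDESC : IsDESC T A') (hk : A'.card ≤ k)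
    (A B : Finset V)
    (hA : IsStrongComponent (T \ A') A) (hB : IsStrongComponent (T \ A') B)
    (hne : A ≠ B)
    (hpath : ∃ a ∈ A, ∃ b ∈ B, Reach (T \ A') a b) :
    ∀ a ∈ A, ∀ b ∈ B,
      ((A.card : ℚ) + B.card) / 2 - (k + 1) ≤ (outDeg T a : ℚ) - outDeg T b ∧
      (outDeg T b : ℚ) - outDeg T a ≤ k := by
  classical
  intro a ha b hb
  obtain ⟨a₀, ha₀, b₀, hb₀, hab₀⟩ := hpath
  -- every vertex of A reaches every vertex of B in T \ A'
  have hreach : ∀ x ∈ A, ∀ y ∈ B, Reach (T \ A') x y := fun x hx y hy =>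
    ((reach_mono (induce_subset _ _) (hA.2.1 x hx a₀ ha₀)).trans hab₀).trans
      (reach_mono (induce_subset _ _) (hB.2.1 b₀ hb₀ y hy))
  -- A and B are disjoint
  have hdisj : Disjoint A B := by
    rw [Finset.disjoint_left]
    intro x hxA hxB
    have hBA : B ⊆ A := fun y hy => mem_of_mutual_reach hA hxA
      (reach_mono (induce_subset _ _) (hB.2.1 x hxB y hy))
      (reach_mono (induce_subset _ _) (hB.2.1 y hy x hxB))
    have hAB : A ⊆ B := fun y hy => mem_of_mutual_reach hB hxB
      (reach_mono (induce_subset _ _) (hA.2.1 x hxA y hy))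
      (reach_mono (induce_subset _ _) (hA.2.1 y hy x hxA))
    exact hne (Finset.Subset.antisymm hAB hBA)
  -- no arc of T \ A' from B to A
  have hback : ∀ x ∈ A, ∀ y ∈ B, (y, x) ∉ T \ A' := by
    intro x hx y hy hmem
    have hyA : y ∈ A := mem_of_mutual_reach hA hx (hreach x hx y hy)
      (Relation.ReflTransGen.single hmem)
    exact Finset.disjoint_left.mp hdisj hyA hy
  -- no two-arc path from b back to a in T \ A'
  have hnotboth : ∀ r : V, (b, r) ∈ T \ A' → (r, a) ∈ T \ A' → False := by
    intro r h1 h2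
    have : b ∈ A := mem_of_mutual_reach hA ha (hreach a ha b hb)
      ((Relation.ReflTransGen.single h1).trans (Relation.ReflTransGen.single h2))
    exact Finset.disjoint_left.mp hdisj this hb
  have hAsub : A' ⊆ T := hDESC.1
  have hainB : a ∉ B := fun h => Finset.disjoint_left.mp hdisj ha h
  have hbinA : b ∉ A := fun h => Finset.disjoint_left.mp hdisj h hb
  -- decomposition of out-degrees
  have h1a : outDeg T a
      = (A.filter (fun y => (a, y) ∈ T)).card + (B.filter (fun y => (a, y) ∈ T)).card
        + ((Finset.univ \ (A ∪ B)).filter (fun y => (a, y) ∈ T)).card := by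
    rw [outDeg_eq]; exact card_filter_partition hdisj _
  have h1b : outDeg T b
      = (A.filter (fun y => (b, y) ∈ T)).card + (B.filter (fun y => (b, y) ∈ T)).card
        + ((Finset.univ \ (A ∪ B)).filter (fun y => (b, y) ∈ T)).card := by
    rw [outDeg_eq]; exact card_filter_partition hdisj _
  -- within-component bound for a
  have h2 : A.card ≤ 2 * (A.filter (fun y => (a, y) ∈ T)).card
      + (A'.filter (fun p => p.2 = a ∧ p.1 ∈ A)).card + 1 := by
    have e1 := tourn_count hT ha
    have e2 : (A.filter (fun y => (a, y) ∈ T)).card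
        = (A.filter (fun y => (a, y) ∈ T \ A')).card
          + (A.filter (fun y => (a, y) ∈ A')).card :=
      card_filter_split hAsub A (fun y => (a, y))
    have e3 : (A.filter (fun y => (y, a) ∈ T)).card
        = (A.filter (fun y => (y, a) ∈ T \ A')).card
          + (A.filter (fun y => (y, a) ∈ A')).card :=
      card_filter_split hAsub A (fun y => (y, a))
    have e4 : (A.filter (fun y => (a, y) ∈ T \ A')).card
        = (A.filter (fun y => (y, a) ∈ T \ A')).card := by
      have hbal := (hDESC.2 A hA).2 a
      rw [outDeg_induce (T \ A') ha, inDeg_induce (T \ A') ha] at hbal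
      exact hbal
    have e5 : (A.filter (fun y => (y, a) ∈ A')).card
        = (A'.filter (fun p => p.2 = a ∧ p.1 ∈ A)).card := card_tail A' a A
    omega
  -- within-component bound for b
  have h3 : 2 * (B.filter (fun y => (b, y) ∈ T)).card + 1
      ≤ B.card + (A'.filter (fun p => p.1 = b ∧ p.2 ∈ B)).card := by
    have e1 := tourn_count hT hb
    have e2 : (B.filter (fun y => (b, y) ∈ T)).card
        = (B.filter (fun y => (b, y) ∈ T \ A')).card
          + (B.filter (fun y => (b, y) ∈ A')).card :=
      card_filter_split hAsub B (fun y => (b, y))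
    have e3 : (B.filter (fun y => (y, b) ∈ T)).card
        = (B.filter (fun y => (y, b) ∈ T \ A')).card
          + (B.filter (fun y => (y, b) ∈ A')).card :=
      card_filter_split hAsub B (fun y => (y, b))
    have e4 : (B.filter (fun y => (b, y) ∈ T \ A')).card
        = (B.filter (fun y => (y, b) ∈ T \ A')).card := by
      have hbal := (hDESC.2 B hB).2 b
      rw [outDeg_induce (T \ A') hb, inDeg_induce (T \ A') hb] at hbal
      exact hbal
    have e5 : (B.filter (fun y => (b, y) ∈ A')).card
        = (A'.filter (fun p => p.1 = b ∧ p.2 ∈ B)).card := card_head A' b B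
    omega
  -- arcs from a into B
  have h4 : B.card ≤ (B.filter (fun y => (a, y) ∈ T)).card
      + (A'.filter (fun p => p.2 = a ∧ p.1 ∈ B)).card := by
    have e0 : (B.filter (fun y => (a, y) ∈ T)).card
        + (B.filter (fun y => ¬ (a, y) ∈ T)).card = B.card :=
      Finset.card_filter_add_card_filter_not (p := fun y => (a, y) ∈ T)
    have e1 : (B.filter (fun y => ¬ (a, y) ∈ T)).card
        ≤ (B.filter (fun y => (y, a) ∈ A')).card := by
      apply Finset.card_le_card
      intro y hy
      obtain ⟨hyB, hnt⟩ := Finset.mem_filter.mp hy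
      have hya : y ≠ a := fun h => hainB (h ▸ hyB)
      have hyT : (y, a) ∈ T := (hT.2 y a hya).mpr hnt
      have hnot : (y, a) ∉ T \ A' := hback a ha y hyB
      refine Finset.mem_filter.mpr ⟨hyB, ?_⟩
      by_contra hA'
      exact hnot (Finset.mem_sdiff.mpr ⟨hyT, hA'⟩)
    have e2 : (B.filter (fun y => (y, a) ∈ A')).card
        = (A'.filter (fun p => p.2 = a ∧ p.1 ∈ B)).card := card_tail A' a B
    omega
  -- arcs from b into A
  have h5 : (A.filter (fun y => (b, y) ∈ T)).card
      ≤ (A'.filter (fun p => p.1 = b ∧ p.2 ∈ A)).card := by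
    have e1 : (A.filter (fun y => (b, y) ∈ T)).card
        ≤ (A.filter (fun y => (b, y) ∈ A')).card := by
      apply Finset.card_le_card
      intro y hy
      obtain ⟨hyA, ht⟩ := Finset.mem_filter.mp hy
      have hnot : (b, y) ∉ T \ A' := hback y hyA b hb
      refine Finset.mem_filter.mpr ⟨hyA, ?_⟩
      by_contra hA'
      exact hnot (Finset.mem_sdiff.mpr ⟨ht, hA'⟩)
    have e2 : (A.filter (fun y => (b, y) ∈ A')).card
        = (A'.filter (fun p => p.1 = b ∧ p.2 ∈ A)).card := card_head A' b A
    omega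
  -- arcs to the rest of the vertices
  have h6 : ((Finset.univ \ (A ∪ B)).filter (fun y => (b, y) ∈ T)).card
      ≤ ((Finset.univ \ (A ∪ B)).filter (fun y => (a, y) ∈ T)).card
        + (A'.filter (fun p => p.1 = b ∧ p.2 ∈ Finset.univ \ (A ∪ B))).card
        + (A'.filter (fun p => p.2 = a ∧ p.1 ∈ Finset.univ \ (A ∪ B))).card := by
    have hsubset : (Finset.univ \ (A ∪ B)).filter (fun y => (b, y) ∈ T)
        ⊆ ((Finset.univ \ (A ∪ B)).filter (fun y => (a, y) ∈ T))
          ∪ (((Finset.univ \ (A ∪ B)).filter (fun y => (b, y) ∈ A'))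
            ∪ ((Finset.univ \ (A ∪ B)).filter (fun y => (y, a) ∈ A'))) := by
      intro r hr
      obtain ⟨hrR, hbt⟩ := Finset.mem_filter.mp hr
      have hrAB : r ∉ A ∪ B := (Finset.mem_sdiff.mp hrR).2
      by_cases hat : (a, r) ∈ T
      · exact Finset.mem_union.mpr (Or.inl (Finset.mem_filter.mpr ⟨hrR, hat⟩))
      by_cases hbA' : (b, r) ∈ A'
      · exact Finset.mem_union.mpr (Or.inr (Finset.mem_union.mpr
          (Or.inl (Finset.mem_filter.mpr ⟨hrR, hbA'⟩))))
      have hra : r ≠ a := fun h => hrAB (Finset.mem_union.mpr (Or.inl (h ▸ ha)))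
      have hrat : (r, a) ∈ T := (hT.2 r a hra).mpr hat
      have hbr : (b, r) ∈ T \ A' := Finset.mem_sdiff.mpr ⟨hbt, hbA'⟩
      have hraA' : (r, a) ∈ A' := by
        by_contra hA'
        exact hnotboth r hbr (Finset.mem_sdiff.mpr ⟨hrat, hA'⟩)
      exact Finset.mem_union.mpr (Or.inr (Finset.mem_union.mpr
        (Or.inr (Finset.mem_filter.mpr ⟨hrR, hraA'⟩))))
    have e1 := Finset.card_le_card hsubset
    have e2 := Finset.card_union_le
      (((Finset.univ \ (A ∪ B)).filter (fun y => (a, y) ∈ T)))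
      ((((Finset.univ \ (A ∪ B)).filter (fun y => (b, y) ∈ A'))
        ∪ ((Finset.univ \ (A ∪ B)).filter (fun y => (y, a) ∈ A'))))
    have e3 := Finset.card_union_le
      (((Finset.univ \ (A ∪ B)).filter (fun y => (b, y) ∈ A')))
      (((Finset.univ \ (A ∪ B)).filter (fun y => (y, a) ∈ A')))
    have e4 : ((Finset.univ \ (A ∪ B)).filter (fun y => (b, y) ∈ A')).card
        = (A'.filter (fun p => p.1 = b ∧ p.2 ∈ Finset.univ \ (A ∪ B))).card :=
      card_head A' b (Finset.univ \ (A ∪ B))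
    have e5 : ((Finset.univ \ (A ∪ B)).filter (fun y => (y, a) ∈ A')).card
        = (A'.filter (fun p => p.2 = a ∧ p.1 ∈ Finset.univ \ (A ∪ B))).card :=
      card_tail A' a (Finset.univ \ (A ∪ B))
    omega
  -- total bound on the six arc classes
  have h7 : (A'.filter (fun p => p.2 = a ∧ p.1 ∈ A)).card
      + (A'.filter (fun p => p.2 = a ∧ p.1 ∈ B)).card
      + (A'.filter (fun p => p.2 = a ∧ p.1 ∈ Finset.univ \ (A ∪ B))).card
      + (A'.filter (fun p => p.1 = b ∧ p.2 ∈ A)).card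
      + (A'.filter (fun p => p.1 = b ∧ p.2 ∈ B)).card
      + (A'.filter (fun p => p.1 = b ∧ p.2 ∈ Finset.univ \ (A ∪ B))).card
      ≤ k + 1 := by
    have hIa : (A'.filter (fun p => p.2 = a ∧ p.1 ∈ A)).card
        + (A'.filter (fun p => p.2 = a ∧ p.1 ∈ B)).card
        + (A'.filter (fun p => p.2 = a ∧ p.1 ∈ Finset.univ \ (A ∪ B))).card
        ≤ (A'.filter (fun p => p.2 = a)).card := by
      have := three_filter_le (A'.filter (fun p => p.2 = a))
        (fun p : V × V => p.1 ∈ A) (fun p => p.1 ∈ B)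
        (fun p => p.1 ∈ Finset.univ \ (A ∪ B))
        (fun p hp hq => Finset.disjoint_left.mp hdisj hp hq)
        (fun p hp hq => (Finset.mem_sdiff.mp hq).2 (Finset.mem_union.mpr (Or.inl hp)))
        (fun p hp hq => (Finset.mem_sdiff.mp hq).2 (Finset.mem_union.mpr (Or.inr hp)))
      rwa [Finset.filter_filter, Finset.filter_filter, Finset.filter_filter] at this
    have hOb : (A'.filter (fun p => p.1 = b ∧ p.2 ∈ A)).card
        + (A'.filter (fun p => p.1 = b ∧ p.2 ∈ B)).card
        + (A'.filter (fun p => p.1 = b ∧ p.2 ∈ Finset.univ \ (A ∪ B))).card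
        ≤ (A'.filter (fun p => p.1 = b)).card := by
      have := three_filter_le (A'.filter (fun p => p.1 = b))
        (fun p : V × V => p.2 ∈ A) (fun p => p.2 ∈ B)
        (fun p => p.2 ∈ Finset.univ \ (A ∪ B))
        (fun p hp hq => Finset.disjoint_left.mp hdisj hp hq)
        (fun p hp hq => (Finset.mem_sdiff.mp hq).2 (Finset.mem_union.mpr (Or.inl hp)))
        (fun p hp hq => (Finset.mem_sdiff.mp hq).2 (Finset.mem_union.mpr (Or.inr hp)))
      rwa [Finset.filter_filter, Finset.filter_filter, Finset.filter_filter] at this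
    have hIO : (A'.filter (fun p => p.2 = a)).card + (A'.filter (fun p => p.1 = b)).card
        ≤ A'.card + 1 := by
      have e0 := Finset.card_union_add_card_inter
        (A'.filter (fun p => p.2 = a)) (A'.filter (fun p => p.1 = b))
      have e1 : ((A'.filter (fun p => p.2 = a)) ∪ (A'.filter (fun p => p.1 = b))).card
          ≤ A'.card := Finset.card_le_card (Finset.union_subset
            (Finset.filter_subset _ _) (Finset.filter_subset _ _))
      have e2 : ((A'.filter (fun p => p.2 = a)) ∩ (A'.filter (fun p => p.1 = b))).card
          ≤ 1 := by
        have hsub : (A'.filter (fun p => p.2 = a)) ∩ (A'.filter (fun p => p.1 = b))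
            ⊆ {(b, a)} := by
          intro p hp
          obtain ⟨hp1, hp2⟩ := Finset.mem_inter.mp hp
          have h1 : p.2 = a := (Finset.mem_filter.mp hp1).2
          have h2 : p.1 = b := (Finset.mem_filter.mp hp2).2
          exact Finset.mem_singleton.mpr (Prod.ext h2 h1)
        calc _ ≤ ({(b, a)} : Finset (V × V)).card := Finset.card_le_card hsub
          _ = 1 := Finset.card_singleton _
      omega
    omega
  have hAcard : 1 ≤ A.card := Finset.card_pos.mpr hA.1
  have hBcard : 1 ≤ B.card := Finset.card_pos.mpr hB.1
  have M1 : A.card + B.card + 2 * outDeg T b ≤ 2 * outDeg T a + 2 * (k + 1) := by omega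
  have M2 : outDeg T b ≤ outDeg T a + k := by omega
  constructor
  · have hq : (A.card : ℚ) + B.card + 2 * outDeg T b ≤ 2 * outDeg T a + 2 * (k + 1) := by
      exact_mod_cast M1
    linarith
  · have hq : (outDeg T b : ℚ) ≤ outDeg T a + k := by exact_mod_cast M2
    linarith
end
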